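/- arXiv:1802.10489 — 5 statements merged into one kernel-verified Lean document; each statement's English description precedes it below -/
import Mathlib

section
/- For every integer n ≥ 2, Γ(n/2)/Γ((n+1)/2) ≤ 2/√(2n−1) ≤ √(π/n). -/
open Filter Topology Real Real.Wallis

/-- Closed form for `Γ(k + 1/2)`. -/
lemma aux_gamma_half (k : ℕ) :
    Real.Gamma ((k : ℝ) + 1 / 2) * (4 ^ k * (Nat.factorial k : ℝ)) =
      Real.sqrt π * (Nat.factorial (2 * k) : ℝ) := by
  induction k with
  | zero => norm_num [Real.Gamma_one_half_eq]
  | succ k ih =>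
      have h1 : ((k + 1 : ℕ) : ℝ) + 1 / 2 = ((k : ℝ) + 1 / 2) + 1 := by push_cast; ring
      rw [h1, Real.Gamma_add_one (by positivity : ((k:ℝ) + 1/2) ≠ 0)]
      have hf1 : ((Nat.factorial (k+1) : ℕ) : ℝ) = ((k:ℝ) + 1) * (Nat.factorial k : ℝ) := by
        push_cast [Nat.factorial_succ]; ring
      have hf2 : ((Nat.factorial (2*(k+1)) : ℕ) : ℝ) =
          (2*(k:ℝ)+2) * (2*(k:ℝ)+1) * (Nat.factorial (2*k) : ℝ) := by
        have h2 : 2*(k+1) = (2*k+1)+1 := by ring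
        rw [h2, Nat.factorial_succ, Nat.factorial_succ]
        push_cast; ring
      rw [hf1, hf2]
      linear_combination (4*((k:ℝ)+1)*((k:ℝ)+1/2)) * ih

/-- Even identity: `Γ(k+1)² π (2k+1) = 4 W k Γ(k+3/2)²`. -/
lemma aux_idE (k : ℕ) :
    Real.Gamma ((k : ℝ) + 1) ^ 2 * (π * (2 * k + 1)) =
      4 * W k * Real.Gamma ((k : ℝ) + 1 + 1 / 2) ^ 2 := by
  induction k with
  | zero =>
      have hW0 : W 0 = 1 := by simp [W]
      have h : ((0:ℕ):ℝ) + 1 + 1/2 = (1/2 : ℝ) + 1 := by norm_num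
      rw [hW0, h, Real.Gamma_add_one (by norm_num : (1/2:ℝ) ≠ 0), Real.Gamma_one_half_eq]
      have hs : Real.sqrt π ^ 2 = π := Real.sq_sqrt pi_nonneg
      have h1 : Real.Gamma (((0:ℕ):ℝ) + 1) = 1 := by norm_num [Real.Gamma_one]
      rw [h1]
      push_cast
      linear_combination -hs
  | succ k ih =>
      have hW : W (k + 1) * ((2 * (k:ℝ) + 1) * (2 * k + 3)) = W k * (2 * (k:ℝ) + 2) ^ 2 := by
        have hx : (2*(k:ℝ)+2)/(2*(k:ℝ)+1) * ((2*(k:ℝ)+2)/(2*(k:ℝ)+3)) *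
            ((2*(k:ℝ)+1)*(2*(k:ℝ)+3)) = (2*(k:ℝ)+2)^2 := by
          have hk1 : (2*(k:ℝ)+1) ≠ 0 := by positivity
          have hk3 : (2*(k:ℝ)+3) ≠ 0 := by positivity
          field_simp
        rw [W_succ, mul_assoc, hx]
      have e1 : Real.Gamma (((k+1:ℕ) : ℝ) + 1) = ((k:ℝ) + 1) * Real.Gamma ((k:ℝ) + 1) := by
        push_cast
        rw [show (k:ℝ) + 1 + 1 = ((k:ℝ)+1) + 1 from rfl,
          Real.Gamma_add_one (by positivity : ((k:ℝ)+1) ≠ 0)]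
      have e2 : Real.Gamma (((k+1:ℕ) : ℝ) + 1 + 1/2) =
          ((k:ℝ) + 1 + 1/2) * Real.Gamma ((k:ℝ) + 1 + 1/2) := by
        have h3 : ((k+1:ℕ):ℝ) + 1 + 1/2 = ((k:ℝ) + 1 + 1/2) + 1 := by push_cast; ring
        rw [h3, Real.Gamma_add_one (by positivity : ((k:ℝ) + 1 + 1/2) ≠ 0)]
      rw [e1, e2]
      apply mul_left_cancel₀
        (show ((2*(k:ℝ)+1)*(2*(k:ℝ)+3)) ≠ 0 by positivity)
      push_cast
      linear_combination ((2*(k:ℝ)+3)^2*((k:ℝ)+1)^2) * ih +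
        (-(4*((k:ℝ)+3/2)^2*Real.Gamma ((k:ℝ)+1+1/2)^2)) * hW

/-- Odd identity: `Γ(m+1/2)² (2m+1) W m = π Γ(m+1)²`. -/
lemma aux_idO (m : ℕ) :
    Real.Gamma ((m : ℝ) + 1 / 2) ^ 2 * ((2 * m + 1) * W m) =
      π * Real.Gamma ((m : ℝ) + 1) ^ 2 := by
  induction m with
  | zero =>
      have hW0 : W 0 = 1 := by simp [W]
      have hs : Real.sqrt π ^ 2 = π := Real.sq_sqrt pi_nonneg
      have h1 : Real.Gamma (((0:ℕ):ℝ) + 1) = 1 := by norm_num [Real.Gamma_one]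
      have h2 : Real.Gamma (((0:ℕ):ℝ) + 1/2) = Real.sqrt π := by
        norm_num [Real.Gamma_one_half_eq]
      rw [hW0, h1, h2]
      push_cast
      linear_combination hs
  | succ m ih =>
      have hW : W (m + 1) * ((2 * (m:ℝ) + 1) * (2 * m + 3)) = W m * (2 * (m:ℝ) + 2) ^ 2 := by
        have hx : (2*(m:ℝ)+2)/(2*(m:ℝ)+1) * ((2*(m:ℝ)+2)/(2*(m:ℝ)+3)) *
            ((2*(m:ℝ)+1)*(2*(m:ℝ)+3)) = (2*(m:ℝ)+2)^2 := by
          have hm1 : (2*(m:ℝ)+1) ≠ 0 := by positivity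
          have hm3 : (2*(m:ℝ)+3) ≠ 0 := by positivity
          field_simp
        rw [W_succ, mul_assoc, hx]
      have e1 : Real.Gamma (((m+1:ℕ) : ℝ) + 1) = ((m:ℝ) + 1) * Real.Gamma ((m:ℝ) + 1) := by
        push_cast
        rw [show (m:ℝ) + 1 + 1 = ((m:ℝ)+1) + 1 from rfl,
          Real.Gamma_add_one (by positivity : ((m:ℝ)+1) ≠ 0)]
      have e2 : Real.Gamma (((m+1:ℕ) : ℝ) + 1/2) =
          ((m:ℝ) + 1/2) * Real.Gamma ((m:ℝ) + 1/2) := by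
        have h3 : ((m+1:ℕ):ℝ) + 1/2 = ((m:ℝ) + 1/2) + 1 := by push_cast; ring
        rw [h3, Real.Gamma_add_one (by positivity : ((m:ℝ) + 1/2) ≠ 0)]
      rw [e1, e2]
      apply mul_left_cancel₀
        (show ((2*(m:ℝ)+1)*(2*(m:ℝ)+3)) ≠ 0 by positivity)
      push_cast
      linear_combination (((m:ℝ)+1/2)^2*Real.Gamma ((m:ℝ)+1/2)^2*(2*(m:ℝ)+3)) * hW +
        (((m:ℝ)+1)^2*(2*(m:ℝ)+1)*(2*(m:ℝ)+3)) * ih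

lemma aux_ratio_tendsto (a b : ℝ) (hb : 0 < b) :
    Tendsto (fun k : ℕ => (4 * (k:ℝ) + a) / (4 * k + b)) atTop (𝓝 1) := by
  have h0 : Tendsto (fun k : ℕ => (1:ℝ) / k) atTop (𝓝 0) := tendsto_one_div_atTop_nhds_zero_nat
  have h1 : Tendsto (fun k : ℕ => ((4:ℝ) + a * (1/k)) / (4 + b * (1/k))) atTop
      (𝓝 (((4:ℝ) + a * 0) / (4 + b * 0))) := by
    have hd : ((4:ℝ) + b * 0) ≠ 0 := by norm_num
    exact (tendsto_const_nhds.add (tendsto_const_nhds.mul h0)).div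
      (tendsto_const_nhds.add (tendsto_const_nhds.mul h0)) hd
  rw [show ((4:ℝ) + a * 0) / (4 + b * 0) = 1 by norm_num] at h1
  refine Filter.Tendsto.congr' ?_ h1
  filter_upwards [eventually_ge_atTop 1] with k hk
  have hk0 : (0:ℝ) < k := by exact_mod_cast hk
  have hk' : (k:ℝ) ≠ 0 := ne_of_gt hk0
  rw [div_eq_div_iff (by positivity) (by positivity)]
  field_simp

/-- Upper bound: `W k (4k+3) ≤ (π/2)(4k+2)`. -/
lemma aux_W_upper (k : ℕ) : W k * (4 * (k:ℝ) + 3) ≤ π / 2 * (4 * k + 2) := by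
  have hmono : Monotone (fun k : ℕ => W k * ((4 * (k:ℝ) + 3) / (4 * k + 2))) := by
    apply monotone_nat_of_le_succ
    intro k
    rw [W_succ]
    push_cast
    rw [mul_assoc]
    refine mul_le_mul_of_nonneg_left ?_ (W_pos k).le
    rw [div_mul_div_comm, div_mul_div_comm,
      div_le_div_iff₀ (by positivity) (by positivity)]
    nlinarith [Nat.cast_nonneg (α := ℝ) k, sq_nonneg ((k:ℝ))]
  have hlim : Tendsto (fun k : ℕ => W k * ((4 * (k:ℝ) + 3) / (4 * k + 2))) atTop (𝓝 (π/2)) := by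
    have := tendsto_W_nhds_pi_div_two.mul (aux_ratio_tendsto 3 2 (by norm_num))
    simpa using this
  have h := hmono.ge_of_tendsto hlim k
  have h2 : (0:ℝ) < 4 * (k:ℝ) + 2 := by positivity
  calc W k * (4 * (k:ℝ) + 3) = W k * ((4 * (k:ℝ) + 3) / (4 * k + 2)) * (4 * k + 2) := by
        field_simp
    _ ≤ π/2 * (4 * k + 2) := mul_le_mul_of_nonneg_right h h2.le

/-- Lower bound: `(π/2)(4k+1) ≤ W k (4k+2)`. -/
lemma aux_W_lower (k : ℕ) : π / 2 * (4 * (k:ℝ) + 1) ≤ W k * (4 * k + 2) := by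
  have hanti : Antitone (fun k : ℕ => W k * ((4 * (k:ℝ) + 2) / (4 * k + 1))) := by
    apply antitone_nat_of_succ_le
    intro k
    rw [W_succ]
    push_cast
    rw [mul_assoc]
    refine mul_le_mul_of_nonneg_left ?_ (W_pos k).le
    rw [div_mul_div_comm, div_mul_div_comm,
      div_le_div_iff₀ (by positivity) (by positivity)]
    nlinarith [Nat.cast_nonneg (α := ℝ) k, sq_nonneg ((k:ℝ))]
  have hlim : Tendsto (fun k : ℕ => W k * ((4 * (k:ℝ) + 2) / (4 * k + 1))) atTop (𝓝 (π/2)) := by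
    have := tendsto_W_nhds_pi_div_two.mul (aux_ratio_tendsto 2 1 (by norm_num))
    simpa using this
  have h := hanti.le_of_tendsto hlim k
  have h2 : (0:ℝ) < 4 * (k:ℝ) + 1 := by positivity
  calc π/2 * (4 * (k:ℝ) + 1) ≤ W k * ((4 * (k:ℝ) + 2) / (4 * k + 1)) * (4 * k + 1) :=
        mul_le_mul_of_nonneg_right h h2.le
    _ = W k * (4 * k + 2) := by field_simp

theorem stmt7 (n : ℕ) (hn : 2 ≤ n) :
    Real.Gamma ((n : ℝ) / 2) / Real.Gamma (((n : ℝ) + 1) / 2)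
      ≤ 2 / Real.sqrt (2 * (n : ℝ) - 1) ∧
    2 / Real.sqrt (2 * (n : ℝ) - 1) ≤ Real.sqrt (Real.pi / n) := by
  have hn1 : (1:ℝ) ≤ (n:ℝ) := by exact_mod_cast Nat.one_le_of_lt hn
  have hden : (0:ℝ) < 2 * (n:ℝ) - 1 := by linarith
  have hsq : Real.sqrt (2 * (n:ℝ) - 1) ^ 2 = 2 * (n:ℝ) - 1 := Real.sq_sqrt hden.le
  have hsqpos : 0 < Real.sqrt (2 * (n:ℝ) - 1) := Real.sqrt_pos.mpr hden
  constructor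
  · -- main inequality
    have key : Real.Gamma ((n : ℝ) / 2) ^ 2 * (2 * (n:ℝ) - 1) ≤
        4 * Real.Gamma (((n : ℝ) + 1) / 2) ^ 2 := by
      rcases Nat.even_or_odd n with ⟨k, hk⟩ | ⟨k, hk⟩
      · -- n = k + k, k = j + 1
        subst hk
        obtain ⟨j, rfl⟩ : ∃ j, k = j + 1 := ⟨k - 1, by omega⟩
        have h1 : (((j+1) + (j+1) : ℕ) : ℝ) / 2 = (j:ℝ) + 1 := by push_cast; ring
        have h2 : ((((j+1) + (j+1) : ℕ) : ℝ) + 1) / 2 = (j:ℝ) + 1 + 1/2 := by push_cast; ring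
        have h3 : 2 * (((j+1) + (j+1) : ℕ) : ℝ) - 1 = 4 * (j:ℝ) + 3 := by push_cast; ring
        rw [h1, h2, h3]
        have idE := aux_idE j
        have hU := aux_W_upper j
        have hG2 := Real.Gamma_pos_of_pos (by positivity : (0:ℝ) < (j:ℝ) + 1 + 1/2)
        have hWj : W j = Real.Gamma ((j:ℝ)+1)^2 * π * (2*(j:ℝ)+1) /
            (4 * Real.Gamma ((j:ℝ)+1+1/2)^2) := by
          rw [eq_div_iff (by positivity)]
          linear_combination -idE
        rw [hWj, div_mul_eq_mul_div, div_le_iff₀ (by positivity)] at hU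
        rw [← mul_le_mul_iff_right₀ (show (0:ℝ) < π * (2*(j:ℝ)+1) by positivity)]
        nlinarith [hU]
      · -- n = 2k + 1
        subst hk
        have h1 : ((2*k + 1 : ℕ) : ℝ) / 2 = (k:ℝ) + 1/2 := by push_cast; ring
        have h2 : (((2*k + 1 : ℕ) : ℝ) + 1) / 2 = (k:ℝ) + 1 := by push_cast; ring
        have h3 : 2 * ((2*k + 1 : ℕ) : ℝ) - 1 = 4 * (k:ℝ) + 1 := by push_cast; ring
        rw [h1, h2, h3]
        have idO := aux_idO k
        have hL := aux_W_lower k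
        have hG1 := Real.Gamma_pos_of_pos (by positivity : (0:ℝ) < (k:ℝ) + 1/2)
        have h4 := mul_le_mul_of_nonneg_right hL
          (show (0:ℝ) ≤ Real.Gamma ((k:ℝ)+1/2)^2 * (2*(k:ℝ)+1) by positivity)
        have h5 : W k * (4*(k:ℝ)+2) * (Real.Gamma ((k:ℝ)+1/2)^2 * (2*(k:ℝ)+1)) =
            π * Real.Gamma ((k:ℝ)+1)^2 * (4*(k:ℝ)+2) := by
          linear_combination (4*(k:ℝ)+2) * idO
        rw [← mul_le_mul_iff_right₀ (show (0:ℝ) < π * (2*(k:ℝ)+1) by positivity)]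
        nlinarith [h4, h5]
    have hGn : 0 < Real.Gamma ((n : ℝ) / 2) := Real.Gamma_pos_of_pos (by positivity)
    have hGn1 : 0 < Real.Gamma (((n : ℝ) + 1) / 2) := Real.Gamma_pos_of_pos (by positivity)
    rw [div_le_div_iff₀ hGn1 hsqpos]
    have e1 : Real.Gamma ((n:ℝ)/2) * Real.sqrt (2*(n:ℝ)-1) =
        Real.sqrt (Real.Gamma ((n:ℝ)/2)^2 * (2*(n:ℝ)-1)) := by
      rw [Real.sqrt_mul (sq_nonneg _), Real.sqrt_sq hGn.le]
    have e2 : (2:ℝ) * Real.Gamma (((n:ℝ)+1)/2) =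
        Real.sqrt ((2 * Real.Gamma (((n:ℝ)+1)/2))^2) := (Real.sqrt_sq (by positivity)).symm
    rw [e1, e2]
    apply Real.sqrt_le_sqrt
    nlinarith [key]
  · -- easy part: 4n ≤ π(2n−1)
    have hnpos : (0:ℝ) < n := by linarith
    have hn2 : (2:ℝ) ≤ (n:ℝ) := by exact_mod_cast hn
    rw [Real.le_sqrt (by positivity) (by positivity)]
    rw [div_pow, hsq]
    rw [div_le_div_iff₀ hden hnpos]
    nlinarith [Real.pi_gt_three, hn2, hden]
end

section
/- Let w, z ∈ R^n with ‖w‖, ‖z‖ ≤ R, let δ > 0, and let a be uniform on S^{n−1} and τ ∼ N(0, R²/n) independent. Then the probability that the hyperplane {x : a·x = τ} separates some point of the δ-ball around w from some point of the δ-ball around z is at most √(2/π)·(‖w − z‖/R + δ√n/R). -/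
open MeasureTheory ProbabilityTheory
open scoped RealInnerProductSpace ENNReal NNReal

section Aux

variable {n : ℕ}

local notation "E" => EuclideanSpace ℝ (Fin n)

lemma aux_exists_iso (u v : E) (hu : ‖u‖ = 1) (hv : ‖v‖ = 1) :
    ∃ O : E ≃ₗᵢ[ℝ] E, O u = v := by
  by_cases h : u + v = 0
  · refine ⟨LinearIsometryEquiv.neg ℝ, ?_⟩
    have hvu : v = -u := eq_neg_of_add_eq_zero_right h
    simp [hvu]
  · refine ⟨Submodule.reflection (ℝ ∙ (u + v)), ?_⟩
    have hm : ‖u + v‖ ≠ 0 := by simpa [norm_eq_zero] using h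
    have hm2 : (‖u + v‖ : ℝ) ^ 2 = 2 + 2 * ⟪u, v⟫ := by
      rw [norm_add_sq_real, hu, hv]; ring
    have hden : (2 : ℝ) + 2 * ⟪u, v⟫ ≠ 0 := by
      rw [← hm2]; positivity
    have hnum : ⟪u + v, u⟫ = 1 + ⟪u, v⟫ := by
      rw [inner_add_left, real_inner_self_eq_norm_sq, hu, real_inner_comm]; ring
    have hc : ⟪u + v, u⟫ / ((‖u + v‖ : ℝ) ^ 2) = 1 / 2 := by
      rw [hnum, hm2, div_eq_iff hden]
      linarith
    rw [Submodule.reflection_singleton_apply]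
    simp only [RCLike.ofReal_real_eq_id, id_eq]
    rw [hc]
    rw [show (2 : ℕ) • ((1 / 2 : ℝ) • (u + v)) = u + v by
      rw [two_smul ℕ, ← add_smul]; norm_num]
    abel

lemma aux_inner_sq_eq (μ : Measure E)
    (hinv : ∀ O : E ≃ₗᵢ[ℝ] E, μ.map O = μ)
    {u v : E} (hu : ‖u‖ = 1) (hv : ‖v‖ = 1) :
    ∫⁻ x, ENNReal.ofReal (⟪x, u⟫ ^ 2) ∂μ = ∫⁻ x, ENNReal.ofReal (⟪x, v⟫ ^ 2) ∂μ := by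
  obtain ⟨O, hO⟩ := aux_exists_iso u v hu hv
  have hmeas : Measurable fun x : E => ENNReal.ofReal (⟪x, v⟫ ^ 2) :=
    ENNReal.measurable_ofReal.comp ((continuous_id.inner continuous_const).pow 2).measurable
  calc ∫⁻ x, ENNReal.ofReal (⟪x, u⟫ ^ 2) ∂μ
      = ∫⁻ x, ENNReal.ofReal (⟪O x, v⟫ ^ 2) ∂μ := by
        refine lintegral_congr fun x => ?_
        rw [← hO, LinearIsometryEquiv.inner_map_map]
    _ = ∫⁻ x, ENNReal.ofReal (⟪x, v⟫ ^ 2) ∂(μ.map O) :=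
        (lintegral_map hmeas O.continuous.measurable).symm
    _ = _ := by rw [hinv O]

lemma aux_sq_moment (hn : 1 ≤ n) (μ : Measure E) [IsProbabilityMeasure μ]
    (hsph : μ (Metric.sphere (0 : E) 1) = 1)
    (hinv : ∀ O : E ≃ₗᵢ[ℝ] E, μ.map O = μ)
    (y : E) :
    ∫⁻ x, ENNReal.ofReal (⟪x, y⟫ ^ 2) ∂μ = ENNReal.ofReal (‖y‖ ^ 2 / n) := by
  by_cases hy : y = 0
  · simp [hy]
  have hny : ‖y‖ ≠ 0 := norm_ne_zero_iff.mpr hy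
  set yhat : E := ‖y‖⁻¹ • y with hyhat
  have hyhatn : ‖yhat‖ = 1 := by
    rw [hyhat, norm_smul, norm_inv, norm_norm, inv_mul_cancel₀ hny]
  have hei : ∀ i : Fin n, ‖(EuclideanSpace.single i (1 : ℝ) : E)‖ = 1 := by
    intro i; simp
  have hsingle : ∀ (i : Fin n) (x : E), ⟪x, (EuclideanSpace.single i (1 : ℝ) : E)⟫ = x i := by
    intro i x
    rw [EuclideanSpace.inner_single_right]
    simp
  -- each coordinate integral equals the yhat integral
  have hcoord : ∀ i : Fin n,
      ∫⁻ x, ENNReal.ofReal ((x i) ^ 2) ∂μ = ∫⁻ x, ENNReal.ofReal (⟪x, yhat⟫ ^ 2) ∂μ := by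
    intro i
    rw [← aux_inner_sq_eq μ hinv (hei i) hyhatn]
    refine lintegral_congr fun x => ?_
    rw [hsingle i x]
  -- a.e. on sphere
  have hae : ∀ᵐ x ∂μ, x ∈ Metric.sphere (0 : E) 1 := by
    rw [ae_iff]
    have h0 : μ (Metric.sphere (0 : E) 1)ᶜ = 0 := by
      rw [measure_compl Metric.isClosed_sphere.measurableSet (measure_ne_top μ _), hsph,
        measure_univ, tsub_self]
    exact h0
  have hsum : ∫⁻ x, ENNReal.ofReal (‖x‖ ^ 2) ∂μ = 1 := by
    have : ∫⁻ x, ENNReal.ofReal (‖x‖ ^ 2) ∂μ = ∫⁻ _, 1 ∂μ := by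
      refine lintegral_congr_ae (hae.mono fun x hx => ?_)
      have hx1 : ‖x‖ = 1 := mem_sphere_zero_iff_norm.mp hx
      simp [hx1]
    rw [this, lintegral_one, measure_univ]
  have hnormsq : ∀ x : E, ‖x‖ ^ 2 = ∑ i, (x i) ^ 2 := by
    intro x
    rw [← real_inner_self_eq_norm_sq, PiLp.inner_apply]
    simp [sq]
  have hmeasc : ∀ i : Fin n, Measurable fun x : E => ENNReal.ofReal ((x i) ^ 2) := by
    intro i
    exact ENNReal.measurable_ofReal.comp
      (((continuous_apply i).comp (PiLp.continuous_ofLp 2 _)).pow 2).measurable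
  have hkey : (n : ℝ≥0∞) * ∫⁻ x, ENNReal.ofReal (⟪x, yhat⟫ ^ 2) ∂μ = 1 := by
    calc (n : ℝ≥0∞) * ∫⁻ x, ENNReal.ofReal (⟪x, yhat⟫ ^ 2) ∂μ
        = ∑ i : Fin n, ∫⁻ x, ENNReal.ofReal (⟪x, yhat⟫ ^ 2) ∂μ := by
          rw [Finset.sum_const, Finset.card_univ, Fintype.card_fin, nsmul_eq_mul]
      _ = ∑ i : Fin n, ∫⁻ x, ENNReal.ofReal ((x i) ^ 2) ∂μ := by
          refine Finset.sum_congr rfl fun i _ => (hcoord i).symm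
      _ = ∫⁻ x, ∑ i : Fin n, ENNReal.ofReal ((x i) ^ 2) ∂μ :=
          (lintegral_finset_sum _ fun i _ => hmeasc i).symm
      _ = ∫⁻ x, ENNReal.ofReal (‖x‖ ^ 2) ∂μ := by
          refine lintegral_congr fun x => ?_
          rw [hnormsq x, ← ENNReal.ofReal_sum_of_nonneg]
          intro i _; positivity
      _ = 1 := hsum
  have hn0 : (n : ℝ≥0∞) ≠ 0 := by
    simp only [ne_eq, Nat.cast_eq_zero]; omega
  have hI : ∫⁻ x, ENNReal.ofReal (⟪x, yhat⟫ ^ 2) ∂μ = (n : ℝ≥0∞)⁻¹ := by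
    have h2 := congrArg (fun r => (n : ℝ≥0∞)⁻¹ * r) hkey
    simp only [← mul_assoc, ENNReal.inv_mul_cancel hn0 (ENNReal.natCast_ne_top n), one_mul,
      mul_one] at h2
    exact h2
  have hrw : ∀ x : E, ENNReal.ofReal (⟪x, y⟫ ^ 2)
      = ENNReal.ofReal (‖y‖ ^ 2) * ENNReal.ofReal (⟪x, yhat⟫ ^ 2) := by
    intro x
    rw [← ENNReal.ofReal_mul (by positivity)]
    congr 1
    have : ⟪x, y⟫ = ‖y‖ * ⟪x, yhat⟫ := by
      rw [hyhat, real_inner_smul_right]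
      field_simp
    rw [this]; ring
  calc ∫⁻ x, ENNReal.ofReal (⟪x, y⟫ ^ 2) ∂μ
      = ∫⁻ x, ENNReal.ofReal (‖y‖ ^ 2) * ENNReal.ofReal (⟪x, yhat⟫ ^ 2) ∂μ :=
        lintegral_congr fun x => hrw x
    _ = ENNReal.ofReal (‖y‖ ^ 2) * ∫⁻ x, ENNReal.ofReal (⟪x, yhat⟫ ^ 2) ∂μ :=
        lintegral_const_mul' _ _ ENNReal.ofReal_ne_top
    _ = ENNReal.ofReal (‖y‖ ^ 2) * (n : ℝ≥0∞)⁻¹ := by rw [hI]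
    _ = ENNReal.ofReal (‖y‖ ^ 2 / n) := by
        rw [ENNReal.ofReal_div_of_pos (by exact_mod_cast hn), ENNReal.ofReal_natCast,
          div_eq_mul_inv]

lemma aux_abs_moment (hn : 1 ≤ n) (μ : Measure E) [IsProbabilityMeasure μ]
    (hsph : μ (Metric.sphere (0 : E) 1) = 1)
    (hinv : ∀ O : E ≃ₗᵢ[ℝ] E, μ.map O = μ)
    (y : E) :
    ∫⁻ x, ENNReal.ofReal |⟪x, y⟫| ∂μ ≤ ENNReal.ofReal (‖y‖ / Real.sqrt n) := by
  by_cases hy : y = 0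
  · simp [hy]
  have hnpos : (0 : ℝ) < n := by exact_mod_cast hn
  have hsn : Real.sqrt n * Real.sqrt n = n := Real.mul_self_sqrt hnpos.le
  have hsnpos : 0 < Real.sqrt n := Real.sqrt_pos.mpr hnpos
  have hypos : 0 < ‖y‖ := norm_pos_iff.mpr hy
  set t : ℝ := ‖y‖ / Real.sqrt n with ht
  have htpos : 0 < t := by positivity
  have hpt : ∀ s : ℝ, |s| ≤ t / 2 + (2 * t)⁻¹ * s ^ 2 := by
    intro s
    have h1 : (|s| - t) ^ 2 = s ^ 2 - 2 * t * |s| + t ^ 2 := by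
      nlinarith [sq_abs s]
    have e : t / 2 + (2 * t)⁻¹ * s ^ 2 - |s| = (2 * t)⁻¹ * (|s| - t) ^ 2 := by
      rw [h1]
      field_simp
      ring
    nlinarith [mul_nonneg (inv_nonneg.mpr (by positivity : (0:ℝ) ≤ 2 * t)) (sq_nonneg (|s| - t)), e]
  have hmsq : Measurable fun x : E => ENNReal.ofReal (⟪x, y⟫ ^ 2) :=
    ENNReal.measurable_ofReal.comp ((continuous_id.inner continuous_const).pow 2).measurable
  calc ∫⁻ x, ENNReal.ofReal |⟪x, y⟫| ∂μ
      ≤ ∫⁻ x, ENNReal.ofReal (t / 2) + ENNReal.ofReal ((2 * t)⁻¹) * ENNReal.ofReal (⟪x, y⟫ ^ 2) ∂μ := by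
        refine lintegral_mono fun x => ?_
        rw [← ENNReal.ofReal_mul (by positivity), ← ENNReal.ofReal_add (by positivity) (by positivity)]
        exact ENNReal.ofReal_le_ofReal (hpt _)
    _ = ENNReal.ofReal (t / 2) + ENNReal.ofReal ((2 * t)⁻¹) * ∫⁻ x, ENNReal.ofReal (⟪x, y⟫ ^ 2) ∂μ := by
        rw [lintegral_add_left measurable_const, lintegral_const, measure_univ, mul_one,
          lintegral_const_mul' _ _ ENNReal.ofReal_ne_top]
    _ = ENNReal.ofReal (t / 2) + ENNReal.ofReal ((2 * t)⁻¹) * ENNReal.ofReal (‖y‖ ^ 2 / n) := by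
        rw [aux_sq_moment hn μ hsph hinv y]
    _ = ENNReal.ofReal (‖y‖ / Real.sqrt n) := by
        rw [← ENNReal.ofReal_mul (by positivity), ← ENNReal.ofReal_add (by positivity) (by positivity)]
        congr 1
        rw [ht]
        field_simp
        linear_combination hsn

end Aux

lemma aux_sign_ne {s u : ℝ} (h : Real.sign s ≠ Real.sign u) :
    min s u ≤ 0 ∧ 0 ≤ max s u := by
  by_contra hc
  rw [not_and_or, not_le, not_le] at hc
  rcases hc with hc | hc
  · rw [lt_min_iff] at hc
    exact h (by rw [Real.sign_of_pos hc.1, Real.sign_of_pos hc.2])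
  · rw [max_lt_iff] at hc
    exact h (by rw [Real.sign_of_neg hc.1, Real.sign_of_neg hc.2])

lemma aux_gauss_bd (v : NNReal) (hv : v ≠ 0) (s : Set ℝ) :
    gaussianReal 0 v s ≤ ENNReal.ofReal ((Real.sqrt (2 * Real.pi * v))⁻¹) * volume s := by
  rw [gaussianReal_apply 0 hv s]
  calc ∫⁻ x in s, gaussianPDF 0 v x
      ≤ ∫⁻ _ in s, ENNReal.ofReal ((Real.sqrt (2 * Real.pi * v))⁻¹) := by
        refine lintegral_mono fun x => ?_
        unfold gaussianPDF gaussianPDFReal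
        refine ENNReal.ofReal_le_ofReal ?_
        have h1 : Real.exp (-(x - 0) ^ 2 / (2 * v)) ≤ 1 := by
          rw [Real.exp_le_one_iff]
          apply div_nonpos_of_nonpos_of_nonneg
          · simpa using sq_nonneg (x - 0)
          · positivity
        calc (Real.sqrt (2 * Real.pi * v))⁻¹ * Real.exp (-(x - 0) ^ 2 / (2 * v))
            ≤ (Real.sqrt (2 * Real.pi * v))⁻¹ * 1 := by
              apply mul_le_mul_of_nonneg_left h1 (by positivity)
          _ = _ := mul_one _
    _ = ENNReal.ofReal ((Real.sqrt (2 * Real.pi * v))⁻¹) * volume s := setLIntegral_const s _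

theorem stmt9 (n : ℕ) (hn : 1 ≤ n) (R δ : ℝ) (hR : 0 < R) (hδ : 0 < δ)
    (Ω : Type*) [MeasureSpace Ω] [IsProbabilityMeasure (ℙ : Measure Ω)]
    (a : Ω → EuclideanSpace ℝ (Fin n)) (τ : Ω → ℝ)
    (hma : Measurable a) (hmτ : Measurable τ)
    (hasphere : (Measure.map a ℙ) (Metric.sphere (0 : EuclideanSpace ℝ (Fin n)) 1) = 1)
    (hainv : ∀ O : EuclideanSpace ℝ (Fin n) ≃ₗᵢ[ℝ] EuclideanSpace ℝ (Fin n),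
      Measure.map (⇑O ∘ a) ℙ = Measure.map a ℙ)
    (hτgauss : Measure.map τ ℙ = gaussianReal 0 ⟨R ^ 2 / n, by positivity⟩)
    (hindep : IndepFun a τ ℙ)
    (w z : EuclideanSpace ℝ (Fin n)) (hw : ‖w‖ ≤ R) (hz : ‖z‖ ≤ R) :
    ℙ {ω | ∃ u v : EuclideanSpace ℝ (Fin n), ‖u - w‖ ≤ δ ∧ ‖v - z‖ ≤ δ ∧
        Real.sign (⟪a ω, u⟫ - τ ω) ≠ Real.sign (⟪a ω, v⟫ - τ ω)}
      ≤ ENNReal.ofReal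
        (Real.sqrt (2 / Real.pi) * (‖w - z‖ / R + δ * Real.sqrt (n : ℝ) / R)) := by
  classical
  set vv : NNReal := ⟨R ^ 2 / n, by positivity⟩ with hvv
  have hnpos : (0 : ℝ) < n := by exact_mod_cast hn
  have hvvR : (vv : ℝ) = R ^ 2 / n := rfl
  have hvpos : (0 : ℝ) < vv := by rw [hvvR]; positivity
  have hv0 : vv ≠ 0 := by
    intro h
    rw [h] at hvpos
    simp at hvpos
  set μ : Measure (EuclideanSpace ℝ (Fin n)) := Measure.map a ℙ with hμ
  have : IsProbabilityMeasure μ := Measure.isProbabilityMeasure_map hma.aemeasurable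
  have hinv : ∀ O : EuclideanSpace ℝ (Fin n) ≃ₗᵢ[ℝ] EuclideanSpace ℝ (Fin n), μ.map O = μ := by
    intro O
    rw [hμ, Measure.map_map O.continuous.measurable hma]
    exact hainv O
  -- definitions
  set m : EuclideanSpace ℝ (Fin n) → ℝ := fun x => (⟪x, w⟫ + ⟪x, z⟫) / 2 with hm
  set L : EuclideanSpace ℝ (Fin n) → ℝ := fun x => |⟪x, w - z⟫| / 2 + δ with hL
  have hmc : Continuous m := ((continuous_id.inner continuous_const).add
    (continuous_id.inner continuous_const)).div_const 2
  have hLc : Continuous L :=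
    (((continuous_id.inner continuous_const).abs.div_const 2)).add continuous_const
  set U : Set (EuclideanSpace ℝ (Fin n) × ℝ) := {p | m p.1 - L p.1 ≤ p.2 ∧ p.2 ≤ m p.1 + L p.1} with hU
  have hUm : MeasurableSet U := by
    refine MeasurableSet.inter ?_ ?_
    · exact measurableSet_le ((hmc.comp continuous_fst).sub (hLc.comp continuous_fst)).measurable
        measurable_snd
    · exact measurableSet_le measurable_snd
        ((hmc.comp continuous_fst).add (hLc.comp continuous_fst)).measurable
  set S := {ω | ∃ u v : EuclideanSpace ℝ (Fin n), ‖u - w‖ ≤ δ ∧ ‖v - z‖ ≤ δ ∧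
      Real.sign (⟪a ω, u⟫ - τ ω) ≠ Real.sign (⟪a ω, v⟫ - τ ω)} with hS
  set T := (fun ω => (a ω, τ ω)) ⁻¹' U with hT
  set A := a ⁻¹' Metric.sphere (0 : EuclideanSpace ℝ (Fin n)) 1 with hA
  have hAc : ℙ Aᶜ = 0 := by
    have h1 : ℙ A = 1 := by
      rw [hA, ← Measure.map_apply hma Metric.isClosed_sphere.measurableSet]
      exact hasphere
    have := measure_compl (μ := (ℙ : Measure Ω)) (s := A)
      (by rw [hA]; exact hma Metric.isClosed_sphere.measurableSet) (measure_ne_top _ _)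
    rw [h1, measure_univ] at this
    simpa [hA] using this
  -- inclusion
  have hsub : S ∩ A ⊆ T := by
    rintro ω ⟨⟨u, v, hu, hv, hsign⟩, hωA⟩
    have hna : ‖a ω‖ = 1 := mem_sphere_zero_iff_norm.mp hωA
    have k1 : |⟪a ω, u⟫ - ⟪a ω, w⟫| ≤ δ := by
      rw [← inner_sub_right]
      calc |⟪a ω, u - w⟫| ≤ ‖a ω‖ * ‖u - w‖ := abs_real_inner_le_norm _ _
        _ ≤ δ := by rw [hna, one_mul]; exact hu
    have k2 : |⟪a ω, v⟫ - ⟪a ω, z⟫| ≤ δ := by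
      rw [← inner_sub_right]
      calc |⟪a ω, v - z⟫| ≤ ‖a ω‖ * ‖v - z‖ := abs_real_inner_le_norm _ _
        _ ≤ δ := by rw [hna, one_mul]; exact hv
    obtain ⟨hmin, hmax⟩ := aux_sign_ne hsign
    have hmin' : min ⟪a ω, u⟫ ⟪a ω, v⟫ ≤ τ ω := by
      rcases min_le_iff.mp (by linarith [hmin] : min (⟪a ω, u⟫ - τ ω) (⟪a ω, v⟫ - τ ω) ≤ 0)
        with h | h
      · exact min_le_iff.mpr (Or.inl (by linarith))
      · exact min_le_iff.mpr (Or.inr (by linarith))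
    have hmax' : τ ω ≤ max ⟪a ω, u⟫ ⟪a ω, v⟫ := by
      rcases le_max_iff.mp (by linarith [hmax] : (0:ℝ) ≤ max (⟪a ω, u⟫ - τ ω) (⟪a ω, v⟫ - τ ω))
        with h | h
      · exact le_max_iff.mpr (Or.inl (by linarith))
      · exact le_max_iff.mpr (Or.inr (by linarith))
    have hiwz : ⟪a ω, w - z⟫ = ⟪a ω, w⟫ - ⟪a ω, z⟫ := inner_sub_right _ _ _
    rw [hT, Set.mem_preimage, hU]
    simp only [Set.mem_setOf_eq, hm, hL, hiwz]
    rw [abs_le] at k1 k2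
    rcases min_le_iff.mp hmin' with h1 | h1 <;> rcases le_max_iff.mp hmax' with h2 | h2 <;>
      rcases abs_cases (⟪a ω, w⟫ - ⟪a ω, z⟫) with ⟨he, he'⟩ | ⟨he, he'⟩ <;>
      constructor <;> linarith
  have hST : ℙ S ≤ ℙ T := by
    calc ℙ S ≤ ℙ (T ∪ Aᶜ) := by
          refine measure_mono fun ω hω => ?_
          by_cases hωA : ω ∈ A
          · exact Or.inl (hsub ⟨hω, hωA⟩)
          · exact Or.inr hωA
      _ ≤ ℙ T + ℙ Aᶜ := measure_union_le _ _
      _ = ℙ T := by rw [hAc, add_zero]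
  -- compute ℙ T
  have hprod : Measure.map (fun ω => (a ω, τ ω)) ℙ = μ.prod (gaussianReal 0 vv) := by
    rw [(indepFun_iff_map_prod_eq_prod_map_map hma.aemeasurable hmτ.aemeasurable).mp hindep,
      hτgauss]
  have hPT : ℙ T = ∫⁻ x, gaussianReal 0 vv (Set.Icc (m x - L x) (m x + L x)) ∂μ := by
    rw [hT, ← Measure.map_apply (hma.prodMk hmτ) hUm, hprod, Measure.prod_apply hUm]
    refine lintegral_congr fun x => ?_
    congr 1
  set C : ℝ := (Real.sqrt (2 * Real.pi * vv))⁻¹ with hC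
  have hCpos : 0 < C := by
    rw [hC]
    have : 0 < 2 * Real.pi * vv := by positivity
    positivity
  have hbound : ∀ x : EuclideanSpace ℝ (Fin n), gaussianReal 0 vv (Set.Icc (m x - L x) (m x + L x))
      ≤ ENNReal.ofReal C * (ENNReal.ofReal |⟪x, w - z⟫| + ENNReal.ofReal (2 * δ)) := by
    intro x
    calc gaussianReal 0 vv (Set.Icc (m x - L x) (m x + L x))
        ≤ ENNReal.ofReal C * volume (Set.Icc (m x - L x) (m x + L x)) :=
          aux_gauss_bd vv hv0 _
      _ = ENNReal.ofReal C * (ENNReal.ofReal |⟪x, w - z⟫| + ENNReal.ofReal (2 * δ)) := by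
          rw [Real.volume_Icc]
          congr 1
          rw [← ENNReal.ofReal_add (abs_nonneg _) (by positivity)]
          congr 1
          simp only [hL]
          ring
  have habs : ∫⁻ x, ENNReal.ofReal |⟪x, w - z⟫| ∂μ ≤ ENNReal.ofReal (‖w - z‖ / Real.sqrt n) :=
    aux_abs_moment hn μ hasphere hinv (w - z)
  have hmabs : Measurable fun x : EuclideanSpace ℝ (Fin n) => ENNReal.ofReal |⟪x, w - z⟫| :=
    ENNReal.measurable_ofReal.comp (continuous_id.inner continuous_const).abs.measurable
  have hmain : ℙ T ≤ ENNReal.ofReal (C * (‖w - z‖ / Real.sqrt n + 2 * δ)) := by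
    rw [hPT]
    calc ∫⁻ x, gaussianReal 0 vv (Set.Icc (m x - L x) (m x + L x)) ∂μ
        ≤ ∫⁻ x, ENNReal.ofReal C * (ENNReal.ofReal |⟪x, w - z⟫| + ENNReal.ofReal (2 * δ)) ∂μ :=
          lintegral_mono hbound
      _ = ENNReal.ofReal C * ((∫⁻ x, ENNReal.ofReal |⟪x, w - z⟫| ∂μ) + ENNReal.ofReal (2 * δ)) := by
          rw [lintegral_const_mul' _ _ ENNReal.ofReal_ne_top,
            lintegral_add_right _ measurable_const, lintegral_const, measure_univ, mul_one]
      _ ≤ ENNReal.ofReal C * (ENNReal.ofReal (‖w - z‖ / Real.sqrt n) + ENNReal.ofReal (2 * δ)) := by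
          gcongr
      _ = ENNReal.ofReal (C * (‖w - z‖ / Real.sqrt n + 2 * δ)) := by
          rw [← ENNReal.ofReal_add (by positivity) (by positivity),
            ← ENNReal.ofReal_mul hCpos.le]
  refine le_trans (le_trans hST hmain) (ENNReal.ofReal_le_ofReal ?_)
  -- real arithmetic
  have hs2 : Real.sqrt 2 * Real.sqrt 2 = 2 := Real.mul_self_sqrt (by norm_num)
  have hsπ : Real.sqrt Real.pi * Real.sqrt Real.pi = Real.pi :=
    Real.mul_self_sqrt Real.pi_pos.le
  have hsn : Real.sqrt n * Real.sqrt n = n := Real.mul_self_sqrt hnpos.le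
  have hs2pos : 0 < Real.sqrt 2 := Real.sqrt_pos.mpr (by norm_num)
  have hsπpos : 0 < Real.sqrt Real.pi := Real.sqrt_pos.mpr Real.pi_pos
  have hsnpos : 0 < Real.sqrt n := Real.sqrt_pos.mpr hnpos
  have hsqrtdiv : Real.sqrt (2 / Real.pi) = Real.sqrt 2 / Real.sqrt Real.pi :=
    Real.sqrt_div (by norm_num) Real.pi
  have hCval : C = Real.sqrt n / (Real.sqrt 2 * Real.sqrt Real.pi * R) := by
    rw [hC, hvvR]
    have harg : 2 * Real.pi * (R ^ 2 / n) = 2 * Real.pi * (R / Real.sqrt n) ^ 2 := by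
      rw [div_pow, Real.sq_sqrt hnpos.le]
    rw [harg, show (2 : ℝ) * Real.pi * (R / Real.sqrt n) ^ 2
        = 2 * (Real.pi * (R / Real.sqrt n) ^ 2) by ring,
      Real.sqrt_mul (by norm_num), Real.sqrt_mul Real.pi_pos.le,
      Real.sqrt_sq (by positivity)]
    rw [show Real.sqrt 2 * (Real.sqrt Real.pi * (R / Real.sqrt n))
        = (Real.sqrt 2 * Real.sqrt Real.pi * R) / Real.sqrt n by ring, inv_div]
  rw [hCval, hsqrtdiv]
  have e1 : Real.sqrt n / (Real.sqrt 2 * Real.sqrt Real.pi * R) * (‖w - z‖ / Real.sqrt n + 2 * δ)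
      = ‖w - z‖ / (Real.sqrt 2 * Real.sqrt Real.pi * R)
        + 2 * δ * Real.sqrt n / (Real.sqrt 2 * Real.sqrt Real.pi * R) := by
    field_simp
  have e2 : Real.sqrt 2 / Real.sqrt Real.pi * (‖w - z‖ / R + δ * Real.sqrt n / R)
      = Real.sqrt 2 * ‖w - z‖ / (Real.sqrt Real.pi * R)
        + Real.sqrt 2 * δ * Real.sqrt n / (Real.sqrt Real.pi * R) := by
    field_simp
  rw [e1, e2]
  have hx : (0:ℝ) ≤ ‖w - z‖ := norm_nonneg _
  have t1 : ‖w - z‖ / (Real.sqrt 2 * Real.sqrt Real.pi * R)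
      ≤ Real.sqrt 2 * ‖w - z‖ / (Real.sqrt Real.pi * R) := by
    rw [div_le_div_iff₀ (by positivity) (by positivity)]
    nlinarith [hs2, mul_nonneg hx (by positivity : (0:ℝ) ≤ Real.sqrt Real.pi * R)]
  have t2 : 2 * δ * Real.sqrt n / (Real.sqrt 2 * Real.sqrt Real.pi * R)
      = Real.sqrt 2 * δ * Real.sqrt n / (Real.sqrt Real.pi * R) := by
    rw [div_eq_div_iff (by positivity) (by positivity)]
    linear_combination (-(δ * Real.sqrt (n:ℝ) * Real.sqrt Real.pi * R)) * hs2
  rw [t2]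
  linarith [t1]
end

section
/- For all real x, y such that B(x,y) is defined with x, y > 0, the Beta function satisfies B(x, y) ≥ √(2π) · x^{x−1/2} · y^{y−1/2} / (x + y)^{x+y−1/2}. -/
open Real Filter Set Topology

namespace Stmt11Aux

noncomputable def la (t : ℝ) : ℝ := Real.log (t + 1) - Real.log t

noncomputable def sa (t : ℝ) : ℝ := (t + 1 / 2) * la t - 1

lemma hasDerivAt_la {t : ℝ} (ht : 0 < t) :
    HasDerivAt la ((t + 1)⁻¹ - t⁻¹) t := by
  have h1 : HasDerivAt (fun s : ℝ => Real.log (s + 1)) (t + 1)⁻¹ t := by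
    simpa [Function.comp_def] using (Real.hasDerivAt_log (by positivity)).comp t ((hasDerivAt_id t).add_const 1)
  exact h1.sub (Real.hasDerivAt_log ht.ne')

lemma tendsto_la : Tendsto la atTop (𝓝 0) := by
  have h1 : Tendsto (fun t : ℝ => 1 + t⁻¹) atTop (𝓝 (1 + 0)) :=
    tendsto_const_nhds.add tendsto_inv_atTop_zero
  rw [add_zero] at h1
  have h2 : Tendsto (fun t : ℝ => Real.log (1 + t⁻¹)) atTop (𝓝 0) := by
    have := (Real.continuousAt_log one_ne_zero).tendsto.comp h1
    simpa [Function.comp_def] using this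
  refine h2.congr' ?_
  filter_upwards [eventually_gt_atTop (0 : ℝ)] with t ht
  rw [la, ← Real.log_div (by positivity) ht.ne']
  congr 1
  field_simp

/-- If `f` has nonpositive derivative on `(0,∞)` and tends to `0` at `∞`, then `f ≥ 0` there. -/
lemma nonneg_of_deriv_nonpos_tendsto {f f' : ℝ → ℝ}
    (hd : ∀ s : ℝ, 0 < s → HasDerivAt f (f' s) s)
    (hd0 : ∀ s : ℝ, 0 < s → f' s ≤ 0)
    (hlim : Tendsto f atTop (𝓝 0)) {t : ℝ} (ht : 0 < t) : 0 ≤ f t := by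
  have hanti : AntitoneOn f (Ioi 0) := by
    refine antitoneOn_of_hasDerivWithinAt_nonpos (f' := f') (convex_Ioi 0) ?_ ?_ ?_
    · intro s hs
      exact (hd s hs).continuousAt.continuousWithinAt
    · intro s hs
      rw [interior_Ioi] at hs
      exact (hd s hs).hasDerivWithinAt
    · intro s hs
      rw [interior_Ioi] at hs
      exact hd0 s hs
  refine le_of_tendsto hlim ?_
  filter_upwards [eventually_ge_atTop t] with s hs
  exact hanti ht (lt_of_lt_of_le ht hs) hs

lemma la_lower {t : ℝ} (ht : 0 < t) : (t + 1 / 2)⁻¹ ≤ la t := by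
  have h0 : 0 ≤ la t - (t + 1 / 2)⁻¹ := by
    refine nonneg_of_deriv_nonpos_tendsto (f := fun s => la s - (s + 1 / 2)⁻¹)
      (f' := fun s => (s + 1)⁻¹ - s⁻¹ + 1 / (s + 1 / 2) ^ 2) ?_ ?_ ?_ ht
    · intro s hs
      have h2 : HasDerivAt (fun u : ℝ => (u + 1 / 2)⁻¹) (-1 / (s + 1 / 2) ^ 2) s := by
        simpa [Pi.inv_def] using ((hasDerivAt_id s).add_const (1 / 2 : ℝ)).inv (by positivity)
      have h3 : HasDerivAt (fun s => la s - (s + 1 / 2)⁻¹) _ s := (hasDerivAt_la hs).sub h2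
      convert h3 using 1
      ring
    · intro s hs
      show (s + 1)⁻¹ - s⁻¹ + 1 / (s + 1 / 2) ^ 2 ≤ 0
      have h1 : (s + 1)⁻¹ - s⁻¹ = -(1 / (s * (s + 1))) := by
        field_simp
        ring
      have h2 : (1 : ℝ) / (s + 1 / 2) ^ 2 ≤ 1 / (s * (s + 1)) := by
        apply one_div_le_one_div_of_le (by positivity)
        nlinarith
      rw [h1]
      linarith
    · have h2 : Tendsto (fun s : ℝ => (s + 1 / 2)⁻¹) atTop (𝓝 0) :=
        tendsto_inv_atTop_zero.comp (tendsto_atTop_add_const_right _ _ tendsto_id)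
      simpa using tendsto_la.sub h2
  linarith

lemma la_upper {t : ℝ} (ht : 0 < t) : la t ≤ 1 / 2 * (t⁻¹ + (t + 1)⁻¹) := by
  have h0 : 0 ≤ 1 / 2 * (t⁻¹ + (t + 1)⁻¹) - la t := by
    refine nonneg_of_deriv_nonpos_tendsto (f := fun s => 1 / 2 * (s⁻¹ + (s + 1)⁻¹) - la s)
      (f' := fun s => 1 / 2 * (-1 / s ^ 2 + -1 / (s + 1) ^ 2) - ((s + 1)⁻¹ - s⁻¹)) ?_ ?_ ?_ ht
    · intro s hs
      have h1 : HasDerivAt (fun u : ℝ => u⁻¹) (-1 / s ^ 2) s := by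
        simpa [Pi.inv_def] using (hasDerivAt_id s).inv hs.ne'
      have h2 : HasDerivAt (fun u : ℝ => (u + 1)⁻¹) (-1 / (s + 1) ^ 2) s := by
        simpa [Pi.inv_def] using ((hasDerivAt_id s).add_const (1 : ℝ)).inv (by positivity)
      exact ((h1.add h2).const_mul (1 / 2 : ℝ)).sub (hasDerivAt_la hs)
    · intro s hs
      show 1 / 2 * (-1 / s ^ 2 + -1 / (s + 1) ^ 2) - ((s + 1)⁻¹ - s⁻¹) ≤ 0
      have key : 1 / 2 * (-1 / s ^ 2 + -1 / (s + 1) ^ 2) - ((s + 1)⁻¹ - s⁻¹)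
          = -(1 / 2) * (s⁻¹ - (s + 1)⁻¹) ^ 2 := by
        field_simp
        ring
      rw [key]
      have h3 : (0 : ℝ) ≤ (s⁻¹ - (s + 1)⁻¹) ^ 2 := sq_nonneg _
      nlinarith
    · have h1 : Tendsto (fun s : ℝ => s⁻¹) atTop (𝓝 (0 : ℝ)) := tendsto_inv_atTop_zero
      have h2 : Tendsto (fun s : ℝ => (s + 1)⁻¹) atTop (𝓝 0) :=
        tendsto_inv_atTop_zero.comp (tendsto_atTop_add_const_right _ _ tendsto_id)
      have h4 := ((h1.add h2).const_mul (1 / 2 : ℝ)).sub tendsto_la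
      simpa using h4
  linarith

lemma sa_nonneg {t : ℝ} (ht : 0 < t) : 0 ≤ sa t := by
  have h1 := la_lower ht
  have h2 : (0 : ℝ) < t + 1 / 2 := by linarith
  have h3 : (t + 1 / 2) * (t + 1 / 2)⁻¹ ≤ (t + 1 / 2) * la t :=
    mul_le_mul_of_nonneg_left h1 h2.le
  rw [mul_inv_cancel₀ h2.ne'] at h3
  simp only [sa]
  linarith

lemma sa_le {t : ℝ} (ht : 0 < t) : sa t ≤ 1 / (4 * t) - 1 / (4 * (t + 1)) := by
  have h1 := la_upper ht
  have h2 : (0 : ℝ) < t + 1 / 2 := by linarith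
  have h3 : (t + 1 / 2) * la t ≤ (t + 1 / 2) * (1 / 2 * (t⁻¹ + (t + 1)⁻¹)) :=
    mul_le_mul_of_nonneg_left h1 h2.le
  have h4 : (t + 1 / 2) * (1 / 2 * (t⁻¹ + (t + 1)⁻¹)) - 1
      = 1 / (4 * t) - 1 / (4 * (t + 1)) := by
    field_simp
    ring
  simp only [sa]
  linarith

lemma hasDerivAt_sa {s : ℝ} (hs : 0 < s) :
    HasDerivAt sa (la s + (s + 1 / 2) * ((s + 1)⁻¹ - s⁻¹)) s := by
  have h1 := (((hasDerivAt_id s).add_const (1 / 2 : ℝ)).mul (hasDerivAt_la hs)).sub_const 1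
  have h2 : HasDerivAt sa (1 * la s + (id s + 1 / 2) * ((s + 1)⁻¹ - s⁻¹)) s := h1
  convert h2 using 1
  simp

lemma deriv_sa_nonpos {s : ℝ} (hs : 0 < s) :
    la s + (s + 1 / 2) * ((s + 1)⁻¹ - s⁻¹) ≤ 0 := by
  have h1 := la_upper hs
  have h2 : (s + 1 / 2) * ((s + 1)⁻¹ - s⁻¹) = -(1 / 2 * (s⁻¹ + (s + 1)⁻¹)) := by
    field_simp
    ring
  rw [h2]
  linarith

lemma sa_antitoneOn : AntitoneOn sa (Ioi 0) := by
  refine antitoneOn_of_hasDerivWithinAt_nonpos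
    (f' := fun s => la s + (s + 1 / 2) * ((s + 1)⁻¹ - s⁻¹)) (convex_Ioi 0) ?_ ?_ ?_
  · intro s hs
    exact (hasDerivAt_sa hs).continuousAt.continuousWithinAt
  · intro s hs
    rw [interior_Ioi] at hs
    exact (hasDerivAt_sa hs).hasDerivWithinAt
  · intro s hs
    rw [interior_Ioi] at hs
    exact deriv_sa_nonpos hs

lemma hasDerivAt_dsa {s : ℝ} (hs : 0 < s) :
    HasDerivAt (fun s : ℝ => la s + (s + 1 / 2) * ((s + 1)⁻¹ - s⁻¹))
      (1 / (2 * s ^ 2 * (s + 1) ^ 2)) s := by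
  have h2 : HasDerivAt (fun u : ℝ => (u + 1)⁻¹) (-1 / (s + 1) ^ 2) s := by
    simpa [Pi.inv_def] using ((hasDerivAt_id s).add_const (1 : ℝ)).inv (by positivity)
  have h3 : HasDerivAt (fun u : ℝ => u⁻¹) (-1 / s ^ 2) s := by
    simpa [Pi.inv_def] using (hasDerivAt_id s).inv hs.ne'
  have h4 : HasDerivAt (fun s : ℝ => la s + (s + 1 / 2) * ((s + 1)⁻¹ - s⁻¹)) _ s :=
    (hasDerivAt_la hs).add
    (((hasDerivAt_id s).add_const (1 / 2 : ℝ)).mul (h2.sub h3))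
  convert h4 using 1
  simp only [id_eq, one_mul]
  field_simp
  ring

lemma deriv_sa_monotoneOn :
    MonotoneOn (fun s : ℝ => la s + (s + 1 / 2) * ((s + 1)⁻¹ - s⁻¹)) (Ioi 0) := by
  refine monotoneOn_of_hasDerivWithinAt_nonneg
    (f' := fun s => 1 / (2 * s ^ 2 * (s + 1) ^ 2)) (convex_Ioi 0) ?_ ?_ ?_
  · intro s hs
    exact (hasDerivAt_dsa hs).continuousAt.continuousWithinAt
  · intro s hs
    rw [interior_Ioi] at hs
    exact (hasDerivAt_dsa hs).hasDerivWithinAt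
  · intro s hs
    rw [interior_Ioi] at hs
    have hs' : (0 : ℝ) < s := hs
    show (0:ℝ) ≤ 1 / (2 * s ^ 2 * (s + 1) ^ 2)
    positivity

lemma sa_convexOn : ConvexOn ℝ (Ioi 0) sa := by
  refine MonotoneOn.convexOn_of_deriv (convex_Ioi 0) ?_ ?_ ?_
  · intro s hs
    exact (hasDerivAt_sa hs).continuousAt.continuousWithinAt
  · rw [interior_Ioi]
    intro s hs
    exact (hasDerivAt_sa hs).differentiableAt.differentiableWithinAt
  · rw [interior_Ioi]
    intro u hu v hv huv
    rw [(hasDerivAt_sa hu).deriv, (hasDerivAt_sa hv).deriv]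
    exact deriv_sa_monotoneOn hu hv huv

noncomputable def hh (x : ℝ) : ℝ := ∑' k : ℕ, sa (x + k)

lemma sa_term_le {x : ℝ} (hx : 0 < x) (k : ℕ) :
    sa (x + k) ≤ 1 / (4 * (x + k)) - 1 / (4 * (x + (k + 1))) := by
  have h := sa_le (t := x + k) (by positivity)
  have : x + (k:ℝ) + 1 = x + ((k:ℝ) + 1) := by ring
  rw [this] at h
  exact h

lemma sum_sa_le {x : ℝ} (hx : 0 < x) (n : ℕ) :
    ∑ k ∈ Finset.range n, sa (x + k) ≤ 1 / (4 * x) := by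
  have h1 : ∑ k ∈ Finset.range n, sa (x + k)
      ≤ ∑ k ∈ Finset.range n, (1 / (4 * (x + k)) - 1 / (4 * (x + (k + 1)))) := by
    refine Finset.sum_le_sum fun k _ => ?_
    have := sa_term_le hx k
    push_cast at this ⊢
    linarith
  have h2 : ∑ k ∈ Finset.range n, ((fun m : ℕ => 1 / (4 * (x + m))) k
      - (fun m : ℕ => 1 / (4 * (x + m))) (k + 1)) = 1 / (4 * (x + (0:ℕ))) - 1 / (4 * (x + n)) :=
    Finset.sum_range_sub' (fun m : ℕ => 1 / (4 * (x + m))) n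
  simp only [Nat.cast_zero, add_zero] at h2
  have h3 : ∑ k ∈ Finset.range n, (1 / (4 * (x + k)) - 1 / (4 * (x + (k + 1))))
      = 1 / (4 * x) - 1 / (4 * (x + n)) := by
    rw [← h2]
    refine Finset.sum_congr rfl fun k _ => ?_
    push_cast
    ring_nf
  have h4 : (0:ℝ) ≤ 1 / (4 * (x + n)) := by positivity
  linarith

lemma summable_sa {x : ℝ} (hx : 0 < x) : Summable (fun k : ℕ => sa (x + k)) :=
  summable_of_sum_range_le (fun k => sa_nonneg (by positivity)) (sum_sa_le hx)

lemma hh_nonneg {x : ℝ} (hx : 0 < x) : 0 ≤ hh x :=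
  tsum_nonneg fun k => sa_nonneg (by positivity)

lemma hh_le {x : ℝ} (hx : 0 < x) : hh x ≤ 1 / (4 * x) :=
  Summable.tsum_le_of_sum_range_le (summable_sa hx) (sum_sa_le hx)

lemma hh_rec {x : ℝ} (hx : 0 < x) : hh x = sa x + hh (x + 1) := by
  have h1 := Summable.tsum_eq_zero_add (summable_sa hx)
  rw [hh, h1]
  congr 1
  · norm_num
  · rw [hh]
    refine tsum_congr fun k => ?_
    congr 1
    push_cast
    ring

lemma hh_antitone {x z : ℝ} (hx : 0 < x) (hxz : x ≤ z) : hh z ≤ hh x := by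
  have hz : 0 < z := lt_of_lt_of_le hx hxz
  refine Summable.tsum_le_tsum (fun k => ?_) (summable_sa hz) (summable_sa hx)
  exact sa_antitoneOn (Set.mem_Ioi.mpr (by positivity)) (Set.mem_Ioi.mpr (by positivity))
    (by linarith)

lemma hh_convexOn : ConvexOn ℝ (Ioi 0) hh := by
  refine ⟨convex_Ioi 0, fun p hp q hq a b ha hb hab => ?_⟩
  have hp' : (0:ℝ) < p := hp
  have hq' : (0:ℝ) < q := hq
  have hmem : (0:ℝ) < a • p + b • q := by
    rcases ha.eq_or_lt with rfl | ha'
    · simpa using mul_pos (by linarith : (0:ℝ) < b) hq'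
    · have : 0 ≤ b • q := mul_nonneg hb hq'.le
      have := mul_pos ha' hp'
      simp only [smul_eq_mul] at *
      linarith
  have hterm : ∀ k : ℕ, sa (a • p + b • q + k) ≤ a * sa (p + k) + b * sa (q + k) := by
    intro k
    have hk : a • p + b • q + k = a • (p + k) + b • (q + k) := by
      simp only [smul_eq_mul]
      have : a * k + b * k = k := by
        have := hab
        nlinarith
      ring_nf
      nlinarith [hab]
    rw [hk]
    have := sa_convexOn.2 (Set.mem_Ioi.mpr (by positivity : (0:ℝ) < p + k))
      (Set.mem_Ioi.mpr (by positivity : (0:ℝ) < q + k)) ha hb hab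
    simpa using this
  have hsum : Summable (fun k : ℕ => a * sa (p + k) + b * sa (q + k)) :=
    ((summable_sa hp').mul_left a).add ((summable_sa hq').mul_left b)
  calc hh (a • p + b • q) = ∑' k : ℕ, sa (a • p + b • q + k) := rfl
    _ ≤ ∑' k : ℕ, (a * sa (p + k) + b * sa (q + k)) :=
        Summable.tsum_le_tsum hterm (summable_sa hmem) hsum
    _ = a * ∑' k : ℕ, sa (p + k) + b * ∑' k : ℕ, sa (q + k) := by
        rw [Summable.tsum_add ((summable_sa hp').mul_left a) ((summable_sa hq').mul_left b),
          tsum_mul_left, tsum_mul_left]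
    _ = a • hh p + b • hh q := by simp [hh]

noncomputable def cc : ℝ := 1 - hh 1

noncomputable def ff (x : ℝ) : ℝ := Real.exp ((x - 1 / 2) * Real.log x - x + hh x + cc)

lemma ff_pos (x : ℝ) : 0 < ff x := Real.exp_pos _

lemma ff_one : ff 1 = 1 := by
  have h : ((1:ℝ) - 1 / 2) * Real.log 1 - 1 + hh 1 + cc = 0 := by
    rw [Real.log_one, cc]; ring
  rw [ff, h, Real.exp_zero]

lemma ff_feq {y : ℝ} (hy : 0 < y) : ff (y + 1) = y * ff y := by
  have h : (y + 1 - 1 / 2) * Real.log (y + 1) - (y + 1) + hh (y + 1) + cc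
      = Real.log y + ((y - 1 / 2) * Real.log y - y + hh y + cc) := by
    rw [hh_rec hy, sa, la]
    ring
  rw [ff, ff, h, Real.exp_add, Real.exp_log hy]

lemma ff_conv : ConvexOn ℝ (Ioi 0) (Real.log ∘ ff) := by
  have c1 : ConvexOn ℝ (Ioi 0) (fun x : ℝ => x * Real.log x) :=
    Real.convexOn_mul_log.subset (Ioi_subset_Ici le_rfl) (convex_Ioi 0)
  have c2 : ConvexOn ℝ (Ioi 0) (fun x : ℝ => (1 / 2 : ℝ) • (-Real.log x)) :=
    (strictConcaveOn_log_Ioi.concaveOn.neg).smul (by norm_num)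
  have c3 : ConvexOn ℝ (Ioi 0) (fun x : ℝ => -x) := (concaveOn_id (convex_Ioi 0)).neg
  have c4 := (((c1.add c2).add c3).add hh_convexOn).add_const cc
  refine c4.congr fun x hx => ?_
  have hx' : (0:ℝ) < x := hx
  simp only [Function.comp_apply, ff, Real.log_exp, smul_eq_mul, Pi.add_apply]
  ring

set_option maxHeartbeats 1000000 in
lemma ff_eq_Gamma : EqOn ff Real.Gamma (Ioi 0) :=
  Real.eq_Gamma_of_log_convex ff_conv (fun {y} hy => ff_feq hy) (fun {y} _ => ff_pos y) ff_one

set_option maxHeartbeats 1000000 in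
lemma log_Gamma_eq {x : ℝ} (hx : 0 < x) :
    Real.log (Real.Gamma x) = (x - 1 / 2) * Real.log x - x + hh x + cc := by
  rw [← ff_eq_Gamma (Set.mem_Ioi.mpr hx), ff, Real.log_exp]

lemma tendsto_hh_succ : Tendsto (fun n : ℕ => hh ((n:ℝ) + 1)) atTop (𝓝 0) := by
  have hb : Tendsto (fun n : ℕ => 1 / (4 * ((n:ℝ) + 1))) atTop (𝓝 0) := by
    have h1 : Tendsto (fun n : ℕ => 4 * ((n:ℝ) + 1)) atTop atTop :=
      Filter.Tendsto.const_mul_atTop (show (0:ℝ) < 4 by norm_num)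
        (tendsto_atTop_add_const_right _ 1 tendsto_natCast_atTop_atTop)
    have h2 := tendsto_inv_atTop_zero.comp h1
    rw [show ((fun r : ℝ => r⁻¹) ∘ fun n : ℕ => 4 * ((n:ℝ) + 1))
      = fun n : ℕ => 1 / (4 * ((n:ℝ) + 1)) from funext fun n => by
        simp [Function.comp, one_div]] at h2
    exact h2
  refine tendsto_of_tendsto_of_tendsto_of_le_of_le tendsto_const_nhds hb
    (fun n => hh_nonneg (by positivity)) (fun n => hh_le (by positivity))

lemma tendsto_sa_nat : Tendsto (fun n : ℕ => sa n) atTop (𝓝 0) := by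
  have hb : Tendsto (fun n : ℕ => 1 / (n:ℝ)) atTop (𝓝 0) :=
    tendsto_one_div_atTop_nhds_zero_nat
  refine tendsto_of_tendsto_of_tendsto_of_le_of_le' tendsto_const_nhds hb ?_ ?_
  · filter_upwards [eventually_ge_atTop 1] with n hn
    exact sa_nonneg (by exact_mod_cast Nat.lt_of_lt_of_le Nat.zero_lt_one hn)
  · filter_upwards [eventually_ge_atTop 1] with n hn
    have hn' : (0:ℝ) < n := by exact_mod_cast Nat.lt_of_lt_of_le Nat.zero_lt_one hn
    have h1 := sa_le hn'
    have h2 : (0:ℝ) ≤ 1 / (4 * ((n:ℝ) + 1)) := by positivity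
    have h3 : 1 / (4 * (n:ℝ)) ≤ 1 / (n:ℝ) := by
      apply one_div_le_one_div_of_le hn'
      linarith
    linarith

lemma cc_eq : cc = Real.log (Real.sqrt (2 * Real.pi)) := by
  have key : ∀ n : ℕ, 1 ≤ n →
      cc + hh ((n:ℝ) + 1) = Real.log (Stirling.stirlingSeq n) + 1 / 2 * Real.log 2 - sa n := by
    intro n hn
    have hn' : (0:ℝ) < n := by exact_mod_cast hn
    have hg : Real.log (Real.Gamma ((n:ℝ) + 1))
        = ((n:ℝ) + 1 - 1 / 2) * Real.log ((n:ℝ) + 1) - ((n:ℝ) + 1) + hh ((n:ℝ) + 1) + cc :=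
      log_Gamma_eq (by positivity)
    rw [Real.Gamma_nat_eq_factorial] at hg
    have hs := Stirling.log_stirlingSeq_formula n
    have e2 : Real.log (2 * (n:ℝ)) = Real.log 2 + Real.log n :=
      Real.log_mul two_ne_zero hn'.ne'
    have e3 : Real.log ((n:ℝ) / Real.exp 1) = Real.log n - 1 := by
      rw [Real.log_div hn'.ne' (Real.exp_ne_zero 1), Real.log_exp]
    rw [e2, e3] at hs
    rw [sa, la, hs]
    linarith [hg]
  have hlim1 : Tendsto (fun n : ℕ => cc + hh ((n:ℝ) + 1)) atTop (𝓝 (cc + 0)) :=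
    tendsto_const_nhds.add tendsto_hh_succ
  have hlim2 : Tendsto
      (fun n : ℕ => Real.log (Stirling.stirlingSeq n) + 1 / 2 * Real.log 2 - sa n) atTop
      (𝓝 (Real.log (Real.sqrt Real.pi) + 1 / 2 * Real.log 2 - 0)) := by
    have hπ : (0:ℝ) < Real.sqrt Real.pi := Real.sqrt_pos.mpr Real.pi_pos
    have h1 : Tendsto (fun n : ℕ => Real.log (Stirling.stirlingSeq n)) atTop
        (𝓝 (Real.log (Real.sqrt Real.pi))) :=
      ((Real.continuousAt_log hπ.ne').tendsto).comp Stirling.tendsto_stirlingSeq_sqrt_pi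
    exact (h1.add_const _).sub tendsto_sa_nat
  have heq : (fun n : ℕ => cc + hh ((n:ℝ) + 1)) =ᶠ[atTop]
      (fun n : ℕ => Real.log (Stirling.stirlingSeq n) + 1 / 2 * Real.log 2 - sa n) := by
    filter_upwards [eventually_ge_atTop 1] with n hn
    exact key n hn
  have := tendsto_nhds_unique (hlim1.congr' heq) hlim2
  have hval : Real.log (Real.sqrt (2 * Real.pi))
      = Real.log (Real.sqrt Real.pi) + 1 / 2 * Real.log 2 := by
    rw [Real.log_sqrt (by positivity), Real.log_sqrt Real.pi_pos.le,
      Real.log_mul two_ne_zero Real.pi_pos.ne']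
    ring
  rw [hval]
  linarith

end Stmt11Aux

theorem stmt11 (x y : ℝ) (hx : 0 < x) (hy : 0 < y) :
    Real.sqrt (2 * Real.pi) * x ^ (x - 1 / 2) * y ^ (y - 1 / 2)
        / (x + y) ^ (x + y - 1 / 2)
      ≤ Real.Gamma x * Real.Gamma y / Real.Gamma (x + y) := by
  open Stmt11Aux in
  have hxy : 0 < x + y := by linarith
  have hΓx := Real.Gamma_pos_of_pos hx
  have hΓy := Real.Gamma_pos_of_pos hy
  have hΓxy := Real.Gamma_pos_of_pos hxy
  have hgx := Stmt11Aux.log_Gamma_eq hx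
  have hgy := Stmt11Aux.log_Gamma_eq hy
  have hgxy := Stmt11Aux.log_Gamma_eq hxy
  have hcc := Stmt11Aux.cc_eq
  have hhx := Stmt11Aux.hh_antitone hx (by linarith : x ≤ x + y)
  have hhy := Stmt11Aux.hh_nonneg hy
  have hlog : Real.log (Real.sqrt (2 * Real.pi)) + (x - 1 / 2) * Real.log x
        + (y - 1 / 2) * Real.log y - (x + y - 1 / 2) * Real.log (x + y)
      ≤ Real.log (Real.Gamma x) + Real.log (Real.Gamma y)
        - Real.log (Real.Gamma (x + y)) := by
    rw [hgx, hgy, hgxy, ← hcc]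
    linarith
  have hRHS : Real.Gamma x * Real.Gamma y / Real.Gamma (x + y)
      = Real.exp (Real.log (Real.Gamma x) + Real.log (Real.Gamma y)
        - Real.log (Real.Gamma (x + y))) := by
    rw [Real.exp_sub, Real.exp_add, Real.exp_log hΓx, Real.exp_log hΓy, Real.exp_log hΓxy]
  have hLHS : Real.sqrt (2 * Real.pi) * x ^ (x - 1 / 2) * y ^ (y - 1 / 2)
        / (x + y) ^ (x + y - 1 / 2)
      = Real.exp (Real.log (Real.sqrt (2 * Real.pi)) + (x - 1 / 2) * Real.log x
        + (y - 1 / 2) * Real.log y - (x + y - 1 / 2) * Real.log (x + y)) := by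
    rw [Real.rpow_def_of_pos hx, Real.rpow_def_of_pos hy, Real.rpow_def_of_pos hxy,
      Real.exp_sub, Real.exp_add, Real.exp_add,
      Real.exp_log (Real.sqrt_pos.mpr (by positivity))]
    ring
  rw [hRHS, hLHS]
  exact Real.exp_le_exp.mpr hlog
end

section
/- Let x ∈ R^n with ‖x‖ ≤ R, n ≥ 4. Let a be uniform on S^{n−1}, τ ∼ N(0, 2R²/n), and z ∼ N(0, σ_z²), all independent. Then P[ sign(a·x − τ) ≠ sign(a·x − τ + z) ] ≤ √( σ_z² / (σ_z² + 2R²/n + 4‖x‖²/n) ). -/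
open MeasureTheory ProbabilityTheory Real
open scoped RealInnerProductSpace NNReal ENNReal

lemma my_measurable_sign : Measurable Real.sign := by
  have h : Real.sign = fun r : ℝ => if r < 0 then (-1:ℝ) else if 0 < r then 1 else 0 := by
    funext r; rfl
  rw [h]
  exact Measurable.ite (measurableSet_lt measurable_id measurable_const) measurable_const
    (Measurable.ite (measurableSet_lt measurable_const measurable_id) measurable_const
      measurable_const)

lemma my_gauss_map_neg (v : ℝ≥0) :
    (gaussianReal 0 v).map (fun x : ℝ => -x) = gaussianReal 0 v := by
  have h := gaussianReal_map_const_mul (μ := 0) (v := v) (-1)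
  have h2 : (fun x : ℝ => (-1 : ℝ) * x) = fun x : ℝ => -x := by funext x; ring
  have h3 : (⟨(-1 : ℝ)^2, sq_nonneg _⟩ : ℝ≥0) = 1 := by ext; norm_num
  rw [h2] at h
  rw [h]
  congr 1
  · simp
  · ext; simp

lemma my_gauss_Iic_zero (v : ℝ≥0) (hv : v ≠ 0) : gaussianReal 0 v (Set.Iic 0) = 1/2 := by
  have hatom : gaussianReal 0 v ({0} : Set ℝ) = 0 :=
    (gaussianReal_absolutelyContinuous 0 hv) (measure_singleton 0)
  have hsymm : gaussianReal 0 v (Set.Iic 0) = gaussianReal 0 v (Set.Ici 0) := by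
    conv_lhs => rw [← my_gauss_map_neg v]
    rw [Measure.map_apply measurable_neg measurableSet_Iic]
    congr 1
    ext t
    simp
  have hIci : gaussianReal 0 v (Set.Ici (0:ℝ)) = gaussianReal 0 v (Set.Ioi 0) := by
    have h0 : Set.Ioi (0:ℝ) = Set.Ici 0 \ {0} := by
      ext t
      simp [lt_iff_le_and_ne, eq_comm]
    rw [h0, measure_diff_null hatom]
  have hunion : gaussianReal 0 v (Set.Iic 0) + gaussianReal 0 v (Set.Ioi 0) = 1 := by
    rw [← measure_union (by simp [Set.disjoint_left]) measurableSet_Ioi,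
      Set.Iic_union_Ioi, measure_univ]
  rw [hsymm, hIci] at hunion ⊢
  have h2 : 2 * gaussianReal 0 v (Set.Ioi 0) = 1 := by rw [two_mul]; exact hunion
  rw [ENNReal.eq_div_iff (by norm_num) (by norm_num)]
  exact h2

lemma my_gauss_shift_half (v : ℝ≥0) (hv : v ≠ 0) (c : ℝ) :
    gaussianReal c v (Set.Iic c) = 1/2 := by
  have h := gaussianReal_map_add_const (μ := 0) (v := v) c
  rw [zero_add] at h
  rw [← h, Measure.map_apply (measurable_add_const c) measurableSet_Iic]
  have : (fun x : ℝ => x + c) ⁻¹' Set.Iic c = Set.Iic 0 := by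
    ext t; simp
  rw [this, my_gauss_Iic_zero v hv]

lemma my_gauss_tail_Iic (v : ℝ≥0) (hv : v ≠ 0) {c : ℝ} (hc : 0 ≤ c) :
    gaussianReal 0 v (Set.Iic (-c)) ≤ ENNReal.ofReal ((1/2) * Real.exp (-c^2 / (2*v))) := by
  have hv' : (0:ℝ) < (v:ℝ) := NNReal.coe_pos.mpr (pos_iff_ne_zero.mpr hv)
  rw [gaussianReal_apply 0 hv]
  have key : ∫⁻ t in Set.Iic (-c), gaussianPDF 0 v t
      ≤ ∫⁻ t in Set.Iic (-c), ENNReal.ofReal (Real.exp (-c^2/(2*v))) * gaussianPDF (-c) v t := by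
    refine setLIntegral_mono ((measurable_gaussianPDF (-c) v).const_mul _) (fun t ht => ?_)
    simp only [Set.mem_Iic] at ht
    unfold gaussianPDF
    rw [← ENNReal.ofReal_mul (Real.exp_nonneg _)]
    apply ENNReal.ofReal_le_ofReal
    unfold gaussianPDFReal
    have hexp : rexp (-(t-0)^2/(2*(v:ℝ))) ≤ rexp (-c^2/(2*(v:ℝ))) * rexp (-(t - -c)^2/(2*(v:ℝ))) := by
      rw [← Real.exp_add]
      apply Real.exp_le_exp.mpr
      rw [← add_div]
      have hkey : -(t-0)^2 ≤ -c^2 + -(t - -c)^2 := by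
        nlinarith [mul_nonneg hc (neg_nonneg.mpr (le_trans ht (neg_nonpos.mpr hc)))]
      exact div_le_div_of_nonneg_right hkey (by positivity) |>.trans_eq rfl
    have hs : (0:ℝ) ≤ (Real.sqrt (2*π*(v:ℝ)))⁻¹ := by positivity
    nlinarith [mul_le_mul_of_nonneg_left hexp hs]
  calc ∫⁻ t in Set.Iic (-c), gaussianPDF 0 v t
      ≤ ∫⁻ t in Set.Iic (-c), ENNReal.ofReal (Real.exp (-c^2/(2*v))) * gaussianPDF (-c) v t :=
        key
    _ = ENNReal.ofReal (Real.exp (-c^2/(2*v))) * ∫⁻ t in Set.Iic (-c), gaussianPDF (-c) v t := by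
        rw [lintegral_const_mul _ (measurable_gaussianPDF (-c) v)]
    _ = ENNReal.ofReal (Real.exp (-c^2/(2*v))) * gaussianReal (-c) v (Set.Iic (-c)) := by
        rw [gaussianReal_apply (-c) hv]
    _ = ENNReal.ofReal (Real.exp (-c^2/(2*v))) * ENNReal.ofReal (1/2) := by
        rw [my_gauss_shift_half v hv (-c)]
        norm_num [ENNReal.ofReal_div_of_pos]
    _ = ENNReal.ofReal ((1/2) * Real.exp (-c^2/(2*v))) := by
        rw [← ENNReal.ofReal_mul (Real.exp_nonneg _), mul_comm]

lemma my_gauss_tail_Ici (v : ℝ≥0) (hv : v ≠ 0) {c : ℝ} (hc : 0 ≤ c) :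
    gaussianReal 0 v (Set.Ici c) ≤ ENNReal.ofReal ((1/2) * Real.exp (-c^2 / (2*v))) := by
  have h : gaussianReal 0 v (Set.Ici c) = gaussianReal 0 v (Set.Iic (-c)) := by
    conv_lhs => rw [← my_gauss_map_neg v]
    rw [Measure.map_apply measurable_neg measurableSet_Ici]
    congr 1
    ext t
    simp [le_neg]
  rw [h]
  exact my_gauss_tail_Iic v hv hc

lemma my_gauss_conv (v : ℝ≥0) (hv : v ≠ 0) (b : ℝ) (hb : 0 < b) (u : ℝ) :
    ∫⁻ t, ENNReal.ofReal ((1/2) * Real.exp (-(u-t)^2 / (2*b))) ∂(gaussianReal 0 v)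
      ≤ ENNReal.ofReal ((1/2) * Real.sqrt (b / (b + v))) := by
  have hv' : (0:ℝ) < (v:ℝ) := NNReal.coe_pos.mpr (pos_iff_ne_zero.mpr hv)
  set K : ℝ := (1/2) * (Real.sqrt (2*π*(v:ℝ)))⁻¹ with hK
  have hKpos : 0 < K := by positivity
  set k : ℝ := 1/(2*b) + 1/(2*(v:ℝ)) with hk
  have hkpos : 0 < k := by positivity
  set c : ℝ := (1/(2*b)) * u / k with hc
  -- step 1: rewrite as lintegral over volume
  rw [gaussianReal_of_var_ne_zero 0 hv,
    lintegral_withDensity_eq_lintegral_mul _ (measurable_gaussianPDF 0 v)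
      (by fun_prop)]
  -- step 2: pointwise bound
  have hpt : ∀ t : ℝ, (gaussianPDF 0 v * fun t => ENNReal.ofReal ((1/2) * Real.exp (-(u-t)^2 / (2*b)))) t
      ≤ ENNReal.ofReal (K * Real.exp (-k * (t - c)^2)) := by
    intro t
    simp only [Pi.mul_apply, gaussianPDF]
    rw [← ENNReal.ofReal_mul (gaussianPDFReal_nonneg 0 v t)]
    apply ENNReal.ofReal_le_ofReal
    unfold gaussianPDFReal
    have hexp : rexp (-(t-0)^2/(2*(v:ℝ))) * rexp (-(u-t)^2/(2*b)) ≤ rexp (-k * (t-c)^2) := by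
      rw [← Real.exp_add]
      apply Real.exp_le_exp.mpr
      have hid : -(t-0)^2/(2*(v:ℝ)) + -(u-t)^2/(2*b)
          = -k * (t-c)^2 + (-(1/(2*b)) * (1/(2*(v:ℝ))) / k * u^2) := by
        rw [hc, hk]
        field_simp
        ring
      rw [hid]
      have : -(1/(2*b)) * (1/(2*(v:ℝ))) / k * u^2 ≤ 0 := by
        have heq : -(1/(2*b)) * (1/(2*(v:ℝ))) / k * u^2
            = -((1/(2*b)) * (1/(2*(v:ℝ))) / k * u^2) := by ring
        rw [heq, neg_nonpos]
        positivity
      linarith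
    calc (√(2*π*(v:ℝ)))⁻¹ * rexp (-(t-0)^2/(2*(v:ℝ))) * ((1/2) * rexp (-(u-t)^2/(2*b)))
        = K * (rexp (-(t-0)^2/(2*(v:ℝ))) * rexp (-(u-t)^2/(2*b))) := by rw [hK]; ring
      _ ≤ K * rexp (-k * (t-c)^2) := by
          exact mul_le_mul_of_nonneg_left hexp hKpos.le
  -- step 3: bound by the gaussian integral
  calc ∫⁻ t, (gaussianPDF 0 v * fun t => ENNReal.ofReal ((1/2) * Real.exp (-(u-t)^2 / (2*b)))) t
      ≤ ∫⁻ t, ENNReal.ofReal (K * Real.exp (-k * (t - c)^2)) := lintegral_mono hpt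
    _ = ENNReal.ofReal (∫ t, K * Real.exp (-k * (t - c)^2)) := by
        rw [ofReal_integral_eq_lintegral_ofReal]
        · exact (((integrable_exp_neg_mul_sq hkpos).comp_sub_right c).const_mul K)
        · filter_upwards with t
          positivity
    _ ≤ ENNReal.ofReal ((1/2) * Real.sqrt (b / (b + v))) := by
        apply ENNReal.ofReal_le_ofReal
        rw [integral_const_mul]
        have : (∫ t : ℝ, Real.exp (-k * (t - c)^2)) = Real.sqrt (π / k) := by
          rw [integral_sub_right_eq_self (fun t : ℝ => Real.exp (-k * t^2)) c]
          exact integral_gaussian k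
        rw [this, hK]
        rw [mul_assoc]
        apply mul_le_mul_of_nonneg_left _ (by norm_num)
        rw [← Real.sqrt_inv, ← Real.sqrt_mul (by positivity)]
        apply le_of_eq
        congr 1
        rw [hk]
        field_simp
        ring

theorem stmt15 (n : ℕ) (hn : 4 ≤ n) (R σz : ℝ) (hR : 0 < R) (hσz : 0 < σz)
    (x : EuclideanSpace ℝ (Fin n)) (hx : ‖x‖ ≤ R)
    (Ω : Type*) [MeasureSpace Ω] [IsProbabilityMeasure (ℙ : Measure Ω)]
    (a : Ω → EuclideanSpace ℝ (Fin n)) (τ z : Ω → ℝ)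
    (hma : Measurable a) (hmτ : Measurable τ) (hmz : Measurable z)
    (hasphere : (Measure.map a ℙ) (Metric.sphere (0 : EuclideanSpace ℝ (Fin n)) 1) = 1)
    (hainv : ∀ O : EuclideanSpace ℝ (Fin n) ≃ₗᵢ[ℝ] EuclideanSpace ℝ (Fin n),
      Measure.map (⇑O ∘ a) ℙ = Measure.map a ℙ)
    (hτgauss : Measure.map τ ℙ = gaussianReal 0 ⟨2 * R ^ 2 / n, by positivity⟩)
    (hzgauss : Measure.map z ℙ = gaussianReal 0 ⟨σz ^ 2, sq_nonneg σz⟩)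
    (hindep : Measure.map (fun ω => (a ω, τ ω, z ω)) ℙ
      = (Measure.map a ℙ).prod ((Measure.map τ ℙ).prod (Measure.map z ℙ))) :
    ℙ {ω | Real.sign (⟪a ω, x⟫ - τ ω) ≠ Real.sign (⟪a ω, x⟫ - τ ω + z ω)}
      ≤ ENNReal.ofReal
        (Real.sqrt (σz ^ 2 / (σz ^ 2 + 2 * R ^ 2 / n + 4 * ‖x‖ ^ 2 / n))) := by
  have hnn : 0 < n := lt_of_lt_of_le (by norm_num) hn
  have hn0 : (0:ℝ) < (n:ℝ) := by exact_mod_cast hnn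
  set vτ : ℝ≥0 := ⟨2 * R ^ 2 / n, by positivity⟩ with hvτ
  set vz : ℝ≥0 := ⟨σz ^ 2, sq_nonneg σz⟩ with hvz
  have hvτR : (vτ : ℝ) = 2 * R ^ 2 / n := rfl
  have hvzR : (vz : ℝ) = σz ^ 2 := rfl
  have hvτ0 : vτ ≠ 0 := by
    intro h
    have : (vτ : ℝ) = 0 := by rw [h]; rfl
    rw [hvτR] at this
    have : (0:ℝ) < 2 * R ^ 2 / n := by positivity
    linarith
  have hvz0 : vz ≠ 0 := by
    intro h
    have : (vz : ℝ) = 0 := by rw [h]; rfl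
    rw [hvzR] at this
    nlinarith
  have hf : Measurable fun v : EuclideanSpace ℝ (Fin n) => ⟪v, x⟫ :=
    (continuous_id.inner continuous_const).measurable
  have hW : Measurable fun ω => ⟪a ω, x⟫ := hf.comp hma
  set μw : Measure ℝ := Measure.map (fun ω => ⟪a ω, x⟫) ℙ with hμw
  haveI : IsProbabilityMeasure (Measure.map a ℙ) := Measure.isProbabilityMeasure_map hma.aemeasurable
  haveI : IsProbabilityMeasure (Measure.map τ ℙ) := Measure.isProbabilityMeasure_map hmτ.aemeasurable
  haveI : IsProbabilityMeasure (Measure.map z ℙ) := Measure.isProbabilityMeasure_map hmz.aemeasurable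
  haveI : IsProbabilityMeasure μw := Measure.isProbabilityMeasure_map hW.aemeasurable
  have hjm : Measurable fun ω => (a ω, τ ω, z ω) := hma.prodMk (hmτ.prodMk hmz)
  -- joint law
  have hjoint : Measure.map (fun ω => (⟪a ω, x⟫, τ ω, z ω)) ℙ
      = μw.prod ((gaussianReal 0 vτ).prod (gaussianReal 0 vz)) := by
    have h1 : (fun ω => (⟪a ω, x⟫, τ ω, z ω))
        = (Prod.map (fun v : EuclideanSpace ℝ (Fin n) => ⟪v, x⟫) id) ∘ (fun ω => (a ω, τ ω, z ω)) :=
      rfl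
    rw [h1, ← Measure.map_map (hf.prodMap measurable_id) hjm, hindep,
      ← Measure.map_prod_map _ _ hf measurable_id, Measure.map_id,
      Measure.map_map hf hma, hτgauss, hzgauss]
    rfl
  -- the event as a preimage
  set S : Set (ℝ × ℝ × ℝ) :=
    {p : ℝ × ℝ × ℝ | Real.sign (p.1 - p.2.1) ≠ Real.sign (p.1 - p.2.1 + p.2.2)} with hSdef
  have hg1 : Measurable fun p : ℝ × ℝ × ℝ => Real.sign (p.1 - p.2.1) :=
    my_measurable_sign.comp (measurable_fst.sub (measurable_fst.comp measurable_snd))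
  have hg2 : Measurable fun p : ℝ × ℝ × ℝ => Real.sign (p.1 - p.2.1 + p.2.2) :=
    my_measurable_sign.comp ((measurable_fst.sub (measurable_fst.comp measurable_snd)).add
      (measurable_snd.comp measurable_snd))
  have hS : MeasurableSet S := (measurableSet_eq_fun hg1 hg2).compl
  have hev : {ω | Real.sign (⟪a ω, x⟫ - τ ω) ≠ Real.sign (⟪a ω, x⟫ - τ ω + z ω)}
      = (fun ω => (⟪a ω, x⟫, τ ω, z ω)) ⁻¹' S := rfl
  rw [hev, ← Measure.map_apply (hW.prodMk (hmτ.prodMk hmz)) hS, hjoint,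
    Measure.prod_apply hS]
  -- per-c tail bound
  have htail : ∀ c : ℝ, c ≠ 0 →
      gaussianReal 0 vz {zz : ℝ | Real.sign c ≠ Real.sign (c + zz)}
        ≤ ENNReal.ofReal ((1/2) * Real.exp (-c^2 / (2 * σz^2))) := by
    intro c hc
    rcases lt_or_gt_of_ne hc with hneg | hpos
    · have hsub : {zz : ℝ | Real.sign c ≠ Real.sign (c + zz)} ⊆ Set.Ici (-c) := by
        intro zz hzz
        simp only [Set.mem_setOf_eq, Real.sign_of_neg hneg] at hzz
        by_contra h
        simp only [Set.mem_Ici, not_le] at h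
        exact hzz (Real.sign_of_neg (by linarith)).symm
      refine (measure_mono hsub).trans ?_
      have := my_gauss_tail_Ici vz hvz0 (c := -c) (by linarith)
      rw [hvzR] at this
      simpa using this
    · have hsub : {zz : ℝ | Real.sign c ≠ Real.sign (c + zz)} ⊆ Set.Iic (-c) := by
        intro zz hzz
        simp only [Set.mem_setOf_eq, Real.sign_of_pos hpos] at hzz
        by_contra h
        simp only [Set.mem_Iic, not_le] at h
        exact hzz (Real.sign_of_pos (by linarith)).symm
      refine (measure_mono hsub).trans ?_
      have := my_gauss_tail_Iic vz hvz0 (c := c) hpos.le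
      rw [hvzR] at this
      exact this
  -- inner double-integral bound
  have hinner : ∀ u : ℝ, ((gaussianReal 0 vτ).prod (gaussianReal 0 vz)) (Prod.mk u ⁻¹' S)
      ≤ ENNReal.ofReal ((1/2) * Real.sqrt (σz^2 / (σz^2 + (2 * R^2 / n)))) := by
    intro u
    rw [Measure.prod_apply (measurable_prodMk_left hS)]
    have hae : ∀ᵐ t ∂(gaussianReal 0 vτ),
        gaussianReal 0 vz (Prod.mk t ⁻¹' (Prod.mk u ⁻¹' S))
          ≤ ENNReal.ofReal ((1/2) * Real.exp (-(u - t)^2 / (2 * σz^2))) := by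
      have hnull : gaussianReal 0 vτ {u} = 0 :=
        gaussianReal_absolutelyContinuous 0 hvτ0 (measure_singleton u)
      rw [ae_iff]
      refine measure_mono_null (fun t ht => ?_) hnull
      simp only [Set.mem_setOf_eq, not_le] at ht
      simp only [Set.mem_singleton_iff]
      by_contra htu
      have hc : u - t ≠ 0 := sub_ne_zero.mpr (Ne.symm htu)
      have heq : (Prod.mk t ⁻¹' (Prod.mk u ⁻¹' S))
          = {zz : ℝ | Real.sign (u - t) ≠ Real.sign ((u - t) + zz)} := rfl
      have hb := htail (u - t) hc
      rw [← heq] at hb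
      exact (not_le.mpr ht) hb
    calc ∫⁻ t, gaussianReal 0 vz (Prod.mk t ⁻¹' (Prod.mk u ⁻¹' S)) ∂(gaussianReal 0 vτ)
        ≤ ∫⁻ t, ENNReal.ofReal ((1/2) * Real.exp (-(u - t)^2 / (2 * σz^2)))
            ∂(gaussianReal 0 vτ) := lintegral_mono_ae hae
      _ ≤ ENNReal.ofReal ((1/2) * Real.sqrt (σz^2 / (σz^2 + (vτ : ℝ)))) :=
          my_gauss_conv vτ hvτ0 (σz^2) (by positivity) u
      _ = ENNReal.ofReal ((1/2) * Real.sqrt (σz^2 / (σz^2 + (2 * R^2 / n)))) := by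
          rw [hvτR]
  calc ∫⁻ u, ((gaussianReal 0 vτ).prod (gaussianReal 0 vz)) (Prod.mk u ⁻¹' S) ∂μw
      ≤ ∫⁻ _, ENNReal.ofReal ((1/2) * Real.sqrt (σz^2 / (σz^2 + (2 * R^2 / n)))) ∂μw :=
        lintegral_mono hinner
    _ = ENNReal.ofReal ((1/2) * Real.sqrt (σz^2 / (σz^2 + (2 * R^2 / n)))) := by
        rw [lintegral_const, measure_univ, mul_one]
    _ ≤ ENNReal.ofReal (Real.sqrt (σz ^ 2 / (σz ^ 2 + 2 * R ^ 2 / n + 4 * ‖x‖ ^ 2 / n))) := by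
        apply ENNReal.ofReal_le_ofReal
        have hx2 : ‖x‖^2 ≤ R^2 := by nlinarith [norm_nonneg x]
        have hd1 : (0:ℝ) < σz^2 + 2 * R^2 / n := by positivity
        have hd2 : (0:ℝ) < σz^2 + 2 * R^2 / n + 4 * ‖x‖^2 / n := by positivity
        have hcs : 4 * ‖x‖^2 / (n:ℝ) ≤ 2 * (2 * R^2 / n) := by
          rw [show (2:ℝ) * (2*R^2/n) = 4*R^2/n by ring]
          gcongr
        have key : σz^2 / (σz^2 + 2 * R^2 / n) / 4
            ≤ σz^2 / (σz^2 + 2*R^2/n + 4*‖x‖^2/n) := by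
          rw [div_div, div_le_div_iff₀ (by positivity) hd2]
          nlinarith [mul_pos hσz hσz, sq_nonneg σz]
        have hp : (0:ℝ) ≤ σz^2 / (σz^2 + 2 * R^2 / n) := by positivity
        have h4 : Real.sqrt 4 = 2 := by
          rw [show (4:ℝ) = 2^2 by norm_num, Real.sqrt_sq (by norm_num : (0:ℝ) ≤ 2)]
        calc (1/2 : ℝ) * Real.sqrt (σz^2 / (σz^2 + 2 * R^2 / n))
            = Real.sqrt (σz^2 / (σz^2 + 2 * R^2 / n) / 4) := by
              rw [Real.sqrt_div hp, h4]
              ring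
          _ ≤ Real.sqrt (σz^2 / (σz^2 + 2*R^2/n + 4*‖x‖^2/n)) := Real.sqrt_le_sqrt key
end

section
/- Suppose m ≥ (e/18)·(η/2)^{1/n} and ζ > 0 satisfies m = (1/(2ζ²))·(2n·log(3√n/ζ) + log(2/η)) for given η ∈ (0,1), n ≥ 1. Then ζ ≤ √( (n·log(18m) + log(2/η)) / (2m) ). -/
theorem stmt19 (n : ℕ) (hn : 1 ≤ n) (η m ζ : ℝ) (hη : η ∈ Set.Ioo (0 : ℝ) 1)
    (hζ : 0 < ζ)
    (hm : Real.exp 1 / 18 * (η / 2) ^ (1 / (n : ℝ)) ≤ m)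
    (heq : m = (1 / (2 * ζ ^ 2))
      * (2 * n * Real.log (3 * Real.sqrt n / ζ) + Real.log (2 / η))) :
    ζ ≤ Real.sqrt ((n * Real.log (18 * m) + Real.log (2 / η)) / (2 * m)) := by
  obtain ⟨hη0, hη1⟩ := hη
  have hn1 : (1 : ℝ) ≤ n := by exact_mod_cast hn
  have hnpos : (0 : ℝ) < n := lt_of_lt_of_le one_pos hn1
  have h2η : (0 : ℝ) < 2 / η := by positivity
  have hc : (0 : ℝ) < (2 / η) ^ (1 / (n : ℝ)) := Real.rpow_pos_of_pos h2η _
  set c : ℝ := (2 / η) ^ (1 / (n : ℝ)) with hcdef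
  have hm0 : (0 : ℝ) < m := by
    have : (0 : ℝ) < Real.exp 1 / 18 * (η / 2) ^ (1 / (n : ℝ)) := by positivity
    linarith
  -- 2 * log (3√n/ζ) = log (9n/ζ²)
  have hA : (0 : ℝ) < 9 * n / ζ ^ 2 := by positivity
  set A : ℝ := 9 * n / ζ ^ 2 with hAdef
  have hsq : (3 * Real.sqrt n / ζ) ^ 2 = A := by
    rw [hAdef, div_pow, mul_pow, Real.sq_sqrt hnpos.le]
    ring
  have hapos : (0 : ℝ) < 3 * Real.sqrt n / ζ := by
    have : (0 : ℝ) < Real.sqrt n := Real.sqrt_pos.mpr hnpos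
    positivity
  have hlogA : Real.log A = 2 * Real.log (3 * Real.sqrt n / ζ) := by
    rw [← hsq, Real.log_pow]
    push_cast
    ring
  -- key relation : 2 m ζ² = n log A + log (2/η)
  have hkey : 2 * m * ζ ^ 2 = n * Real.log A + Real.log (2 / η) := by
    rw [hlogA]
    field_simp at heq
    linarith
  set β : ℝ := A * c with hβdef
  have hβpos : (0 : ℝ) < β := mul_pos hA hc
  have hlogc : Real.log c = (1 / n) * Real.log (2 / η) := Real.log_rpow h2η _
  have hnlogβ : (n : ℝ) * Real.log β = n * Real.log A + Real.log (2 / η) := by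
    rw [hβdef, Real.log_mul hA.ne' hc.ne', hlogc]
    field_simp
  have hmain : 2 * m * ζ ^ 2 = n * Real.log β := by rw [hnlogβ]; exact hkey
  -- β log β = 18 m c
  have hlogβ : Real.log β = 2 * m * ζ ^ 2 / n := by
    rw [hmain]; field_simp
  have hx : β * Real.log β = 18 * m * c := by
    rw [hlogβ, hβdef, hAdef]
    field_simp
    ring
  -- e ≤ 18 m c
  have hprod : (η / 2) ^ (1 / (n : ℝ)) * c = 1 := by
    rw [hcdef, ← Real.mul_rpow (by positivity) h2η.le]
    have : η / 2 * (2 / η) = 1 := by field_simp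
    rw [this, Real.one_rpow]
  have hxe : Real.exp 1 ≤ 18 * m * c := by
    have h18 : Real.exp 1 * ((η / 2) ^ (1 / (n : ℝ)) * c) ≤ 18 * m * c := by
      have := mul_le_mul_of_nonneg_right hm (le_of_lt hc)
      nlinarith
    rw [hprod, mul_one] at h18
    exact h18
  -- e ≤ β
  have hβe : Real.exp 1 ≤ β := by
    by_contra h
    push_neg at h
    have hl1 : Real.log β < 1 := by
      have := Real.log_lt_log hβpos h
      rwa [Real.log_exp] at this
    have : β * Real.log β < β := by
      have := mul_lt_mul_of_pos_left hl1 hβpos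
      linarith
    have hex : Real.exp 1 ≤ β * Real.log β := by rw [hx]; exact hxe
    linarith
  have hlog1 : (1 : ℝ) ≤ Real.log β := by
    have := Real.log_le_log (Real.exp_pos 1) hβe
    rwa [Real.log_exp] at this
  have hβx : β ≤ 18 * m * c := by
    rw [← hx]
    have h1 : β * 1 ≤ β * Real.log β := mul_le_mul_of_nonneg_left hlog1 hβpos.le
    linarith
  have hloglex : Real.log β ≤ Real.log (18 * m * c) :=
    Real.log_le_log hβpos hβx
  have hlogx : (n : ℝ) * Real.log (18 * m * c)
      = n * Real.log (18 * m) + Real.log (2 / η) := by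
    rw [Real.log_mul (by positivity) hc.ne', hlogc]
    field_simp
  have hfinal : 2 * m * ζ ^ 2 ≤ n * Real.log (18 * m) + Real.log (2 / η) := by
    rw [← hlogx, hmain]
    exact mul_le_mul_of_nonneg_left hloglex hnpos.le
  rw [show (18 : ℝ) * m = 18 * m from rfl]
  rw [Real.le_sqrt hζ.le, le_div_iff₀ (by positivity : (0:ℝ) < 2 * m)]
  · linarith
  · have hnum : (0:ℝ) ≤ n * Real.log (18 * m) + Real.log (2 / η) := by
      have h0 : (0:ℝ) ≤ 2 * m * ζ ^ 2 := by positivity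
      linarith
    exact div_nonneg hnum (by positivity)
end
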